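/- arXiv:2011.09402 — 14 statements merged into one kernel-verified Lean document; each statement's English description precedes it below -/
import Mathlib

section
/- If A = {A_1, ..., A_m} is a family of subsets of [n] such that |A_i| is odd for every i and |A_i ∩ A_j| is even for all i ≠ j, then m ≤ n. -/
/-- Oddtown theorem (Berlekamp): a family of `m` distinct subsets of `[n]`,
each of odd size, with pairwise even intersections, has `m ≤ n`. -/
theorem oddtown (n m : ℕ) (A : Fin m → Finset (Fin n))
    (hinj : Function.Injective A)
    (hodd : ∀ i, Odd (A i).card)
    (heven : ∀ i j, i ≠ j → Even ((A i ∩ A j).card)) :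
    m ≤ n := by
  classical
  set v : Fin m → (Fin n → ZMod 2) := fun i x => if x ∈ A i then 1 else 0 with hv
  have hdot : ∀ i j, (∑ x, v i x * v j x) = ((A i ∩ A j).card : ZMod 2) := by
    intro i j
    have : ∀ x, v i x * v j x = if x ∈ A i ∩ A j then 1 else 0 := by
      intro x
      simp only [hv, Finset.mem_inter]
      by_cases h1 : x ∈ A i <;> by_cases h2 : x ∈ A j <;> simp [h1, h2]
    rw [Finset.sum_congr rfl fun x _ => this x, Finset.sum_ite_mem, Finset.univ_inter,
      Finset.sum_const, nsmul_eq_mul, mul_one]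
  have hli : LinearIndependent (ZMod 2) v := by
    rw [linearIndependent_iff']
    intro s c hsum j hj
    have h0 : (∑ x, (∑ i ∈ s, c i • v i) x * v j x) = 0 := by
      rw [hsum]; simp
    have : (∑ i ∈ s, c i * ((A i ∩ A j).card : ZMod 2)) = 0 := by
      rw [← h0]
      simp only [Finset.sum_apply, Pi.smul_apply, smul_eq_mul, Finset.sum_mul]
      rw [Finset.sum_comm]
      refine Finset.sum_congr rfl fun i _ => ?_
      rw [← hdot, Finset.mul_sum]
      exact Finset.sum_congr rfl fun x _ => by ring
    have hdiag : ∀ i ∈ s, c i * ((A i ∩ A j).card : ZMod 2)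
        = if i = j then c j else 0 := by
      intro i _
      by_cases h : i = j
      · subst h
        rw [Finset.inter_self, if_pos rfl]
        obtain ⟨k, hk⟩ := hodd i
        rw [hk]; push_cast
        rw [show (2 : ZMod 2) = 0 from rfl]; ring
      · obtain ⟨k, hk⟩ := heven i j h
        rw [hk, if_neg h]; push_cast
        rw [← two_mul, show (2 : ZMod 2) = 0 from rfl]; ring
    rw [Finset.sum_congr rfl hdiag, Finset.sum_ite_eq' s j (fun _ => c j), if_pos hj] at this
    exact this
  have := hli.fintype_card_le_finrank
  simpa using this
end

section
/- Let A_1, ..., A_m and B_1, ..., B_m be subsets of [n] such that |A_i ∩ B_i| is odd for all i ∈ [m], and |A_i ∩ B_j| is even whenever i < j. Then m ≤ n. -/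
/-- Skew oddtown theorem (Babai–Frankl). -/
theorem skew_oddtown (n m : ℕ) (A B : Fin m → Finset (Fin n))
    (hdiag : ∀ i, Odd ((A i ∩ B i).card))
    (hoff : ∀ i j : Fin m, i < j → Even ((A i ∩ B j).card)) :
    m ≤ n := by
  classical
  set a : Fin m → (Fin n → ZMod 2) := fun i x => if x ∈ A i then 1 else 0 with ha
  set b : Fin m → (Fin n → ZMod 2) := fun j x => if x ∈ B j then 1 else 0 with hb
  have key : ∀ i j, (∑ x, a i x * b j x) = ((A i ∩ B j).card : ZMod 2) := by
    intro i j
    simp only [ha, hb]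
    rw [← Finset.sum_filter_add_sum_filter_not Finset.univ (fun x => x ∈ A i ∩ B j)]
    have h1 : ∀ x ∈ Finset.univ.filter (fun x => x ∈ A i ∩ B j),
        (if x ∈ A i then (1:ZMod 2) else 0) * (if x ∈ B j then 1 else 0) = 1 := by
      intro x hx
      simp only [Finset.mem_filter, Finset.mem_inter] at hx
      simp [hx.2.1, hx.2.2]
    have h2 : ∀ x ∈ Finset.univ.filter (fun x => ¬ x ∈ A i ∩ B j),
        (if x ∈ A i then (1:ZMod 2) else 0) * (if x ∈ B j then 1 else 0) = 0 := by
      intro x hx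
      simp only [Finset.mem_filter, Finset.mem_inter, not_and] at hx
      by_cases h : x ∈ A i
      · simp [h, hx.2 h]
      · simp [h]
    rw [Finset.sum_congr rfl h1, Finset.sum_congr rfl h2]
    have hfe : Finset.filter (fun x => x ∈ A i ∧ x ∈ B j) Finset.univ = A i ∩ B j := by
      ext x; simp
    simp [hfe]
  have cast_even : ∀ {c : ℕ}, Even c → (c : ZMod 2) = 0 := by
    intro c hc
    rw [← ZMod.natCast_mod, Nat.even_iff.mp hc, Nat.cast_zero]
  have cast_odd : ∀ {c : ℕ}, Odd c → (c : ZMod 2) = 1 := by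
    intro c hc
    rw [← ZMod.natCast_mod, Nat.odd_iff.mp hc, Nat.cast_one]
  have hli : LinearIndependent (ZMod 2) a := by
    rw [Fintype.linearIndependent_iff]
    intro g hg
    by_contra hne
    push_neg at hne
    have hnonempty : (Finset.univ.filter (fun i => g i ≠ 0)).Nonempty := by
      obtain ⟨i, hi⟩ := hne
      exact ⟨i, by simp [hi]⟩
    set j := (Finset.univ.filter (fun i => g i ≠ 0)).max' hnonempty with hj
    have hgj : g j ≠ 0 := by
      have := (Finset.univ.filter (fun i => g i ≠ 0)).max'_mem hnonempty
      rw [← hj] at this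
      simpa using this
    have hmax : ∀ i, j < i → g i = 0 := by
      intro i hij
      by_contra hgi
      have : i ≤ j := Finset.le_max' _ i (by simp [hgi])
      exact absurd hij (not_lt.mpr this)
    have hsum : (∑ i, g i * (∑ x, a i x * b j x)) = 0 := by
      calc ∑ i, g i * (∑ x, a i x * b j x)
          = ∑ i, ∑ x, g i * a i x * b j x := by
            simp [Finset.mul_sum, mul_assoc]
        _ = ∑ x, ∑ i, g i * a i x * b j x := Finset.sum_comm
        _ = ∑ x, (∑ i, g i • a i) x * b j x := by
            simp [Finset.sum_mul, Finset.sum_apply, smul_eq_mul]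
        _ = 0 := by rw [hg]; simp
    have heval : ∀ i, g i * (∑ x, a i x * b j x) = if i = j then g j else 0 := by
      intro i
      rcases lt_trichotomy i j with h | h | h
      · rw [key, if_neg h.ne, cast_even (hoff i j h), mul_zero]
      · rw [key, if_pos h, h, cast_odd (hdiag j), mul_one]
      · rw [hmax i h, zero_mul, if_neg (ne_of_gt h)]
    rw [Finset.sum_congr rfl (fun i _ => heval i), Finset.sum_ite_eq' Finset.univ j] at hsum
    simp at hsum
    exact hgj hsum
  have := hli.fintype_card_le_finrank
  simpa using this
end

section
/- Let A_1, ..., A_m and B_1, ..., B_m be subsets of [n] such that |A_i ∩ B_j| is even if and only if i ≠ j. If n is odd, then m ≤ n. -/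
/-- A Bollobás set pair modulo 2 on `[n]` with `n` odd has size at most `n`. -/
theorem bollobas_pair_mod_two_odd (n m : ℕ) (A B : Fin m → Finset (Fin n))
    (h : ∀ i j : Fin m, Even ((A i ∩ B j).card) ↔ i ≠ j)
    (hn : Odd n) :
    m ≤ n := by
  classical
  set v : Fin m → (Fin n → ZMod 2) := fun i x => if x ∈ A i then 1 else 0 with hv
  set w : Fin m → (Fin n → ZMod 2) := fun j x => if x ∈ B j then 1 else 0 with hw
  have dot : ∀ i j, (∑ x, v i x * w j x) = ((A i ∩ B j).card : ZMod 2) := by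
    intro i j
    have : ∀ x, v i x * w j x = if x ∈ A i ∩ B j then (1 : ZMod 2) else 0 := by
      intro x
      simp only [hv, hw, Finset.mem_inter, ite_and, mul_ite, mul_one, mul_zero, ite_mul, one_mul, zero_mul]
      split_ifs <;> rfl
    simp only [this]
    rw [Finset.sum_ite_mem, Finset.univ_inter, Finset.sum_const, nsmul_eq_mul, mul_one]
  have dot' : ∀ i j, (∑ x, v i x * w j x) = if i = j then 1 else 0 := by
    intro i j
    rw [dot]
    by_cases hij : i = j
    · have hodd : ¬ Even ((A i ∩ B j).card) := by simp [h, hij]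
      rw [Nat.not_even_iff] at hodd
      rw [if_pos hij, ← ZMod.natCast_mod, hodd]
      norm_num
    · have heven : Even ((A i ∩ B j).card) := (h i j).mpr hij
      rw [Nat.even_iff] at heven
      rw [if_neg hij, ← ZMod.natCast_mod, heven]
      norm_num
  have hli : LinearIndependent (ZMod 2) v := by
    rw [Fintype.linearIndependent_iff]
    intro c hc j
    have := congrArg (fun f => ∑ x, f x * w j x) hc
    simp only [Finset.sum_apply, Pi.smul_apply, smul_eq_mul, Pi.zero_apply, zero_mul,
      Finset.sum_const_zero] at this
    simp only [Finset.sum_mul] at this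
    rw [Finset.sum_comm] at this
    have h2 : ∑ i, c i * (∑ x, v i x * w j x) = 0 := by
      rw [← this]
      congr 1
      ext i
      rw [Finset.mul_sum]
      congr 1
      ext x
      ring
    simpa [dot', Finset.sum_ite_eq'] using h2
  have := hli.fintype_card_le_finrank
  simpa using this
end

section
/- Let A_1, ..., A_m and B_1, ..., B_m be subsets of [n] such that |A_i ∩ B_j| is even if and only if i ≠ j. Then m ≤ n + 1. -/
/-- Bollobás set pairs modulo 2 on `[n]` have size at most `n + 1`. -/
theorem bollobas_pair_mod_two_upper (n m : ℕ) (A B : Fin m → Finset (Fin n))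
    (h : ∀ i j : Fin m, Even ((A i ∩ B j).card) ↔ i ≠ j) :
    m ≤ n + 1 := by
  set v : Fin m → (Fin n → ZMod 2) := fun i k => if k ∈ A i then 1 else 0 with hv
  have key : ∀ i j : Fin m,
      (∑ k : Fin n, v i k * (if k ∈ B j then 1 else 0)) = if i = j then 1 else 0 := by
    intro i j
    have step1 : (∑ k : Fin n, v i k * (if k ∈ B j then 1 else 0))
        = ((A i ∩ B j).card : ZMod 2) := by
      have : ∀ k : Fin n, v i k * (if k ∈ B j then 1 else 0)
          = if k ∈ A i ∩ B j then (1 : ZMod 2) else 0 := by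
        intro k
        simp only [hv, Finset.mem_inter]
        by_cases h1 : k ∈ A i <;> by_cases h2 : k ∈ B j <;> simp [h1, h2]
      rw [Finset.sum_congr rfl fun k _ => this k, Finset.sum_ite_mem,
        Finset.univ_inter, Finset.sum_const, nsmul_eq_mul, mul_one]
    rw [step1]
    have h2 : (2 : ZMod 2) = 0 := by decide
    by_cases hij : i = j
    · have : ¬ Even ((A i ∩ B j).card) := by simp [h, hij]
      obtain ⟨c, hc⟩ := Nat.not_even_iff_odd.mp this
      rw [hij] at hc ⊢
      rw [hc, if_pos rfl]
      push_cast
      rw [h2]; ring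
    · have : Even ((A i ∩ B j).card) := (h i j).mpr hij
      obtain ⟨c, hc⟩ := this
      rw [if_neg hij, hc, show c + c = 2 * c from (two_mul c).symm]
      push_cast
      rw [h2]; ring
  have hli : LinearIndependent (ZMod 2) v := by
    rw [Fintype.linearIndependent_iff]
    intro g hg j
    have heval := congrArg (fun f => ∑ k : Fin n, f k * (if k ∈ B j then 1 else 0)) hg
    simp only [Finset.sum_apply, Pi.smul_apply, smul_eq_mul, Pi.zero_apply,
      zero_mul, Finset.sum_const_zero] at heval
    calc g j = ∑ i : Fin m, g i * (if i = j then 1 else 0) := by simp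
    _ = ∑ i : Fin m, ∑ k : Fin n, g i * (v i k * (if k ∈ B j then 1 else 0)) := by
        refine Finset.sum_congr rfl fun i _ => ?_
        rw [← Finset.mul_sum, key]
    _ = ∑ k : Fin n, ∑ i : Fin m, g i * (v i k * (if k ∈ B j then 1 else 0)) :=
        Finset.sum_comm
    _ = ∑ k : Fin n, (∑ i : Fin m, g i * v i k) * (if k ∈ B j then 1 else 0) := by
        refine Finset.sum_congr rfl fun k _ => ?_
        rw [Finset.sum_mul]
        exact Finset.sum_congr rfl fun i _ => (mul_assoc _ _ _).symm
    _ = 0 := heval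
  have := hli.fintype_card_le_finrank
  simp only [Fintype.card_fin, Module.finrank_fintype_fun_eq_card] at this
  omega
end

section
/- Let A_1, ..., A_m, B_1, ..., B_m, C_1, ..., C_m be subsets of [n] such that |A_i ∩ B_j ∩ C_k| is even if and only if i, j, k are pairwise distinct. Then m ≤ n + 2. -/
/-- Bollobás set (3,3)-tuples modulo 2 on `[n]` have size at most `n + 2`. -/
theorem bollobas_triple_mod_two_upper (n m : ℕ) (A B C : Fin m → Finset (Fin n))
    (h : ∀ i j k : Fin m,
      Even ((A i ∩ B j ∩ C k).card) ↔ (i ≠ j ∧ j ≠ k ∧ i ≠ k)) :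
    m ≤ n + 2 := by
  rcases Nat.eq_zero_or_pos m with hm | hm
  · omega
  haveI : NeZero m := ⟨hm.ne'⟩
  -- even/odd cast facts
  have hcast0 : ∀ c : ℕ, Even c → (c : ZMod 2) = 0 := by
    intro c hc
    rw [← ZMod.natCast_mod, Nat.even_iff.mp hc, Nat.cast_zero]
  have hcast1 : ∀ c : ℕ, ¬ Even c → (c : ZMod 2) = 1 := by
    intro c hc
    rw [← ZMod.natCast_mod, Nat.odd_iff.mp (Nat.not_even_iff_odd.mp hc), Nat.cast_one]
  let v : {j : Fin m // j ≠ 0} → (Fin n → ZMod 2) :=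
    fun j x => if x ∈ A 0 ∩ B j.1 then 1 else 0
  have key : ∀ (j : {j : Fin m // j ≠ 0}) (k : Fin m),
      ∑ x ∈ C k, v j x = ((A 0 ∩ B j.1 ∩ C k).card : ZMod 2) := by
    intro j k
    simp only [v, Finset.sum_ite_mem, Finset.sum_const, nsmul_eq_mul, mul_one]
    rw [Finset.inter_comm]
  have hli : LinearIndependent (ZMod 2) v := by
    rw [Fintype.linearIndependent_iff]
    intro g hg k
    have h2 := congrArg (fun f : Fin n → ZMod 2 => ∑ x ∈ C k.1, f x) hg
    simp only [Finset.sum_apply, Finset.sum_fn, Pi.zero_apply, Finset.sum_const_zero] at h2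
    rw [Finset.sum_comm] at h2
    have h3 : ∑ j, g j * ((A 0 ∩ B j.1 ∩ C k.1).card : ZMod 2) = 0 := by
      rw [← h2]
      refine Finset.sum_congr rfl fun j _ => ?_
      rw [← key j k.1, Finset.mul_sum]
      refine Finset.sum_congr rfl fun x _ => ?_
      simp [v, Pi.smul_apply, smul_eq_mul]
    rw [Finset.sum_eq_single k] at h3
    · rwa [hcast1 _ (fun hc => ((h 0 k.1 k.1).mp hc).2.1 rfl), mul_one] at h3
    · intro j _ hjk
      rw [hcast0 _ ((h 0 j.1 k.1).mpr ⟨fun e => j.2 e.symm, fun e => hjk (Subtype.ext e),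
        fun e => k.2 e.symm⟩), mul_zero]
    · intro hk; exact absurd (Finset.mem_univ k) hk
  have hcard := hli.fintype_card_le_finrank
  rw [Module.finrank_fintype_fun_eq_card] at hcard
  simp only [Fintype.card_fin] at hcard
  have : Fintype.card {j : Fin m // j ≠ 0} = m - 1 := by
    rw [Fintype.card_subtype_compl, Fintype.card_subtype_eq, Fintype.card_fin]
  omega
end

section
/- Suppose A ⊆ 2^[n] is a family of m distinct sets such that for any three distinct members A, B, C, the intersection |A ∩ B ∩ C| is even, while |A| is odd for each A ∈ A and |A ∩ B| is odd for distinct A, B ∈ A. Then m ≤ n + 1. -/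
open Finset

lemma dot_indicator {n : ℕ} (S T : Finset (Fin n)) :
    ∑ x : Fin n, (if x ∈ S then (1 : ZMod 2) else 0) * (if x ∈ T then 1 else 0)
      = ((S ∩ T).card : ZMod 2) := by
  have h : ∀ x : Fin n,
      (if x ∈ S then (1 : ZMod 2) else 0) * (if x ∈ T then 1 else 0)
        = if x ∈ S ∩ T then 1 else 0 := by
    intro x
    by_cases hS : x ∈ S <;> by_cases hT : x ∈ T <;> simp_all
  simp only [h]
  rw [Finset.sum_ite_mem, Finset.univ_inter, Finset.sum_const, nsmul_eq_mul, mul_one]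

/-- A family following (3,3)-oddtown rules has size at most `n + 1`. -/
theorem oddtown_33 (n m : ℕ) (A : Fin m → Finset (Fin n))
    (hinj : Function.Injective A)
    (h1 : ∀ i, Odd (A i).card)
    (h2 : ∀ i j : Fin m, i ≠ j → Odd ((A i ∩ A j).card))
    (h3 : ∀ i j k : Fin m, i ≠ j → j ≠ k → i ≠ k →
      Even ((A i ∩ A j ∩ A k).card)) :
    m ≤ n + 1 := by
  obtain _ | k := m
  · omega
  set v : Fin k → (Fin n → ZMod 2) :=
    fun i x => if x ∈ A 0 ∩ A i.succ then 1 else 0 with hv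
  have key : ∀ i j : Fin k,
      ∑ x : Fin n, v i x * v j x
        = (((A 0 ∩ A i.succ) ∩ (A 0 ∩ A j.succ)).card : ZMod 2) := by
    intro i j
    exact dot_indicator _ _
  have hli : LinearIndependent (ZMod 2) v := by
    apply LinearMap.BilinForm.linearIndependent_of_iIsOrtho
      (B := Matrix.toBilin' (1 : Matrix (Fin n) (Fin n) (ZMod 2)))
    · intro i j hij
      show Matrix.toBilin' (1 : Matrix (Fin n) (Fin n) (ZMod 2)) (v i) (v j) = 0
      rw [Matrix.toBilin'_apply']
      simp only [Matrix.one_mulVec]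
      rw [dotProduct, key i j]
      have hset : (A 0 ∩ A i.succ) ∩ (A 0 ∩ A j.succ)
          = A i.succ ∩ A 0 ∩ A j.succ := by
        ext x; simp only [Finset.mem_inter]; tauto
      rw [hset]
      have hij' : i.succ ≠ j.succ := fun h => hij (Fin.succ_injective _ h)
      have he := h3 i.succ 0 j.succ (Fin.succ_ne_zero i)
        (Fin.succ_ne_zero j).symm hij'
      rw [Nat.even_iff] at he
      rw [← ZMod.natCast_mod, he, Nat.cast_zero]
    · intro i hi
      rw [Matrix.toBilin'_apply'] at hi
      simp only [Matrix.one_mulVec] at hi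
      rw [dotProduct, key i i, Finset.inter_self] at hi
      have ho := h2 0 i.succ (Fin.succ_ne_zero i).symm
      rw [Nat.odd_iff] at ho
      rw [← ZMod.natCast_mod, ho, Nat.cast_one] at hi
      exact one_ne_zero hi
  have := hli.fintype_card_le_finrank
  simp [Module.finrank_fintype_fun_eq_card] at this
  omega
end

section
/- Let t, k be integers with 2 ≤ t and 2t − 2 ≤ k, and let A_{j,i} ⊆ [n] for j ∈ [k], i ∈ [m] be such that |A_{1,i_1} ∩ ... ∩ A_{k,i_k}| is even if and only if at least t of the indices i_1, ..., i_k are distinct. Then C(m, t−1) ≤ n + 1. -/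
lemma mem_finset_inf' {ι α : Type*} [Fintype α] [DecidableEq α] (s : Finset ι)
    (f : ι → Finset α) (a : α) : a ∈ s.inf f ↔ ∀ i ∈ s, a ∈ f i := by
  induction s using Finset.cons_induction with
  | empty => simp [Finset.inf_empty, Finset.top_eq_univ]
  | cons i s h ih => simp [Finset.inf_cons, Finset.inf_eq_inter, ih]

section Aux

variable {m k t : ℕ}

/-- index type: (t-1)-subsets of Fin m -/
abbrev Idx (m t : ℕ) := {S : Finset (Fin m) // S.card = t - 1}

/-- the assignment of rows to column-indices -/
def asg (k : ℕ) (ht : 2 ≤ t) (I J : Idx m t) (j : Fin k) : Fin m :=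
  if h : (j : ℕ) < t - 1 then (I.1.orderIsoOfFin I.2 ⟨j, h⟩ : Fin m)
  else if h2 : (j : ℕ) < 2 * t - 2 then
    (J.1.orderIsoOfFin J.2 ⟨(j : ℕ) - (t - 1), by omega⟩ : Fin m)
  else (I.1.orderIsoOfFin I.2 ⟨0, by omega⟩ : Fin m)

lemma asg_low (ht : 2 ≤ t) (I J J' : Idx m t) (j : Fin k)
    (h : ¬((t - 1) ≤ (j : ℕ) ∧ (j : ℕ) < 2 * t - 2)) :
    asg k ht I J j = asg k ht I J' j := by
  unfold asg
  rcases Nat.lt_or_ge (j : ℕ) (t - 1) with h1 | h1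
  · simp [h1]
  · have h2 : ¬ ((j : ℕ) < 2 * t - 2) := by omega
    simp [h2, show ¬ ((j : ℕ) < t - 1) by omega]

lemma asg_high (ht : 2 ≤ t) (I I' J : Idx m t) (j : Fin k)
    (h : (t - 1) ≤ (j : ℕ) ∧ (j : ℕ) < 2 * t - 2) :
    asg k ht I J j = asg k ht I' J j := by
  unfold asg
  simp [show ¬ ((j : ℕ) < t - 1) by omega, h.2]

lemma asg_image (ht : 2 ≤ t) (hk : 2 * t - 2 ≤ k) (I J : Idx m t) :
    (Finset.univ.image (asg k ht I J)) = I.1 ∪ J.1 := by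
  apply Finset.Subset.antisymm
  · intro x hx
    simp only [Finset.mem_image, Finset.mem_univ, true_and] at hx
    obtain ⟨j, rfl⟩ := hx
    unfold asg
    rcases Nat.lt_or_ge (j : ℕ) (t - 1) with h1 | h1
    · simp only [h1, dif_pos]
      exact Finset.mem_union_left _ ((I.1.orderIsoOfFin I.2 ⟨j, h1⟩).2)
    · rcases Nat.lt_or_ge (j : ℕ) (2 * t - 2) with h2 | h2
      · simp only [show ¬ ((j:ℕ) < t - 1) by omega, dif_neg, h2, dif_pos,
          not_false_iff]
        exact Finset.mem_union_right _ ((J.1.orderIsoOfFin J.2 _).2)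
      · simp only [show ¬ ((j:ℕ) < t - 1) by omega, show ¬ ((j:ℕ) < 2*t-2) by omega,
          dif_neg, not_false_iff]
        exact Finset.mem_union_left _ ((I.1.orderIsoOfFin I.2 _).2)
  · intro x hx
    simp only [Finset.mem_union] at hx
    simp only [Finset.mem_image, Finset.mem_univ, true_and]
    rcases hx with hx | hx
    · obtain ⟨i, hi⟩ := (I.1.orderIsoOfFin I.2).surjective ⟨x, hx⟩
      refine ⟨⟨(i : ℕ), by omega⟩, ?_⟩
      unfold asg
      simp only [show ((i:ℕ)) < t - 1 from i.2, dif_pos]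
      rw [show (⟨(i:ℕ), i.2⟩ : Fin (t-1)) = i by ext; rfl, hi]
    · obtain ⟨i, hi⟩ := (J.1.orderIsoOfFin J.2).surjective ⟨x, hx⟩
      refine ⟨⟨t - 1 + (i : ℕ), by have := i.2; omega⟩, ?_⟩
      unfold asg
      have h1 : ¬ (t - 1 + (i : ℕ) < t - 1) := by omega
      have h2 : t - 1 + (i : ℕ) < 2 * t - 2 := by have := i.2; omega
      simp only [h1, dif_neg, h2, dif_pos, not_false_iff]
      have : (⟨t - 1 + (i:ℕ) - (t-1), by omega⟩ : Fin (t-1)) = i := by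
        ext; simp
      rw [this, hi]

end Aux

/-- For a Bollobás set `(k,t)`-tuple modulo 2 with `2 ≤ t` and `2t - 2 ≤ k`,
we have `C(m, t-1) ≤ n + 1`. -/
theorem bollobas_kt_tuple_binomial_bound (n m k t : ℕ) (ht : 2 ≤ t)
    (hk : 2 * t - 2 ≤ k)
    (A : Fin k → Fin m → Finset (Fin n))
    (hA : ∀ i : Fin k → Fin m,
      Even ((Finset.inf (Finset.univ : Finset (Fin k)) fun j => A j (i j)).card) ↔
        t ≤ ((Finset.univ : Finset (Fin k)).image i).card) :
    Nat.choose m (t - 1) ≤ n + 1 := by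
  classical
  -- the region of "middle" rows
  set R : Finset (Fin k) := Finset.univ.filter
    (fun j : Fin k => (t - 1) ≤ (j : ℕ) ∧ (j : ℕ) < 2 * t - 2) with hR
  -- the vectors
  set x : Idx m t → Fin n → ZMod 2 := fun I v =>
    ∏ j ∈ Rᶜ, (if v ∈ A j (asg k ht I I j) then 1 else 0) with hx
  set y : Idx m t → Fin n → ZMod 2 := fun J v =>
    ∏ j ∈ R, (if v ∈ A j (asg k ht J J j) then 1 else 0) with hy
  -- pairing identity
  have pairing : ∀ I J : Idx m t,
      (∑ v : Fin n, x I v * y J v) = if I = J then 1 else 0 := by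
    intro I J
    have hprod : ∀ v : Fin n, x I v * y J v =
        ∏ j : Fin k, (if v ∈ A j (asg k ht I J j) then (1 : ZMod 2) else 0) := by
      intro v
      rw [hx, hy]
      simp only
      rw [← Finset.prod_compl_mul_prod R
        (f := fun j => (if v ∈ A j (asg k ht I J j) then (1 : ZMod 2) else 0))]
      congr 1
      · apply Finset.prod_congr rfl
        intro j hj
        simp only [hR, Finset.mem_compl, Finset.mem_filter, Finset.mem_univ,
          true_and] at hj
        rw [asg_low ht I I J j hj]
      · apply Finset.prod_congr rfl
        intro j hj
        simp only [hR, Finset.mem_filter, Finset.mem_univ, true_and] at hj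
        rw [asg_high ht J I J j hj]
    simp only [hprod]
    have hcard : (∑ v : Fin n, ∏ j : Fin k,
        (if v ∈ A j (asg k ht I J j) then (1 : ZMod 2) else 0)) =
        ((Finset.univ.inf fun j : Fin k => A j (asg k ht I J j)).card : ZMod 2) := by
      have : ∀ v : Fin n, (∏ j : Fin k,
          (if v ∈ A j (asg k ht I J j) then (1 : ZMod 2) else 0)) =
          (if v ∈ (Finset.univ.inf fun j : Fin k => A j (asg k ht I J j)) then 1 else 0) := by
        intro v
        rw [Finset.prod_boole]
        congr 1
        simp [mem_finset_inf']
      simp only [this]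
      rw [Finset.sum_ite_mem, Finset.univ_inter, Finset.sum_const, nsmul_eq_mul, mul_one]
    rw [hcard]
    have himg := asg_image ht hk I J
    have hAe := hA (asg k ht I J)
    rw [himg] at hAe
    by_cases hIJ : I = J
    · subst hIJ
      have hcu : (I.1 ∪ I.1).card = t - 1 := by rw [Finset.union_self, I.2]
      have hodd : ¬ Even (Finset.univ.inf fun j : Fin k => A j (asg k ht I I j)).card := by
        rw [hAe, hcu]; omega
      rw [Nat.not_even_iff_odd] at hodd
      obtain ⟨c, hc⟩ := hodd
      rw [if_pos rfl, hc]
      push_cast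
      rw [show (2 : ZMod 2) = 0 by decide]
      ring
    · have hun : t ≤ (I.1 ∪ J.1).card := by
        by_contra hlt
        push_neg at hlt
        have h1 : I.1 ⊆ I.1 ∪ J.1 := Finset.subset_union_left
        have h2 : J.1 ⊆ I.1 ∪ J.1 := Finset.subset_union_right
        have e1 : I.1 = I.1 ∪ J.1 :=
          Finset.eq_of_subset_of_card_le h1 (by rw [I.2]; omega)
        have e2 : J.1 = I.1 ∪ J.1 :=
          Finset.eq_of_subset_of_card_le h2 (by rw [J.2]; omega)
        exact hIJ (Subtype.ext (e1.trans e2.symm))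
      have heven : Even (Finset.univ.inf fun j : Fin k => A j (asg k ht I J j)).card :=
        hAe.mpr hun
      obtain ⟨c, hc⟩ := heven
      rw [if_neg hIJ, hc]
      push_cast
      rw [← two_mul, show (2 : ZMod 2) = 0 by decide]
      ring
  -- linear independence
  have hli : LinearIndependent (ZMod 2) x := by
    rw [Fintype.linearIndependent_iff]
    intro g hg J
    have h0 : ∀ v : Fin n, (∑ I : Idx m t, g I • x I v) = 0 := by
      intro v
      have := congrFun hg v
      simpa using this
    simp only [smul_eq_mul] at h0
    calc g J = ∑ I : Idx m t, g I * (if I = J then 1 else 0) := by simp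
      _ = ∑ I : Idx m t, g I * (∑ v : Fin n, x I v * y J v) := by
          simp only [pairing]
      _ = ∑ I : Idx m t, ∑ v : Fin n, g I * x I v * y J v := by
          simp [Finset.mul_sum, mul_assoc]
      _ = ∑ v : Fin n, ∑ I : Idx m t, g I * x I v * y J v := Finset.sum_comm
      _ = ∑ v : Fin n, (∑ I : Idx m t, g I * x I v) * y J v := by
          simp [Finset.sum_mul]
      _ = 0 := by simp [h0]
  have hcard := hli.fintype_card_le_finrank
  rw [Module.finrank_fintype_fun_eq_card] at hcard
  have : Fintype.card (Idx m t) = Nat.choose m (t - 1) := by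
    rw [Fintype.card_finset_len, Fintype.card_fin]
  simp only [Fintype.card_fin] at hcard
  omega
end

section
/- Let t, k be integers with 2 ≤ t ≤ k and 2t − 2 ≤ k. If A ⊆ 2^[n] is a family of m distinct sets such that the intersection of any d distinct members of A has odd size whenever 1 ≤ d < t and even size whenever t ≤ d ≤ k, then m ≤ (t−1+o(1)) n^{1/(t−1)}; in particular m^{t−1} ≤ (t−1)^{t−1}(n+1). -/
open Finset

lemma pow_le_pow_mul_choose' {r m : ℕ} (h : r ≤ m) :
    m ^ r ≤ r ^ r * m.choose r := by
  have key : m ^ r * r.factorial ≤ (r ^ r * m.choose r) * r.factorial := by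
    have h1 : ∏ i ∈ range r, (m * (r - i)) ≤ ∏ i ∈ range r, (r * (m - i)) := by
      apply Finset.prod_le_prod'
      intro i hi
      rw [Nat.mul_sub, Nat.mul_sub]
      have h2 : r * i ≤ m * i := Nat.mul_le_mul_right i h
      have h3 : m * r = r * m := Nat.mul_comm m r
      omega
    calc m ^ r * r.factorial
        = ∏ i ∈ range r, (m * (r - i)) := by
          rw [Finset.prod_mul_distrib, Finset.prod_const, card_range,
            ← Nat.descFactorial_eq_prod_range, Nat.descFactorial_self]
      _ ≤ ∏ i ∈ range r, (r * (m - i)) := h1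
      _ = r ^ r * m.descFactorial r := by
          rw [Finset.prod_mul_distrib, Finset.prod_const, card_range,
            ← Nat.descFactorial_eq_prod_range]
      _ = (r ^ r * m.choose r) * r.factorial := by
          rw [Nat.descFactorial_eq_factorial_mul_choose]; ring
  exact Nat.le_of_mul_le_mul_right key r.factorial_pos

lemma card_le_of_orthonormal {n : ℕ} {ι : Type*} [Fintype ι] [DecidableEq ι]
    (v : ι → (Fin n → ZMod 2))
    (h : ∀ i j, (∑ x, v i x * v j x) = if i = j then 1 else 0) :
    Fintype.card ι ≤ n := by
  have hli : LinearIndependent (ZMod 2) v := by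
    rw [linearIndependent_iff']
    intro s g hg i hi
    have h2 := congrArg (fun w => ∑ x, w x * v i x) hg
    simp only [Finset.sum_apply, Pi.smul_apply, smul_eq_mul, Finset.sum_mul,
      Pi.zero_apply, zero_mul, Finset.sum_const_zero] at h2
    rw [Finset.sum_comm] at h2
    simp only [mul_assoc, ← Finset.mul_sum, h] at h2
    simp only [mul_ite, mul_one, mul_zero, Finset.sum_ite_eq' s i g, hi, if_true] at h2
    exact h2
  have := hli.fintype_card_le_finrank
  rwa [Module.finrank_fintype_fun_eq_card, Fintype.card_fin] at this

lemma odd_cast_zmod2 {c : ℕ} (h : Odd c) : (c : ZMod 2) = 1 := by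
  have h1 : c % 2 = 1 := Nat.odd_iff.mp h
  rw [← ZMod.natCast_mod c 2, h1, Nat.cast_one]

lemma even_cast_zmod2 {c : ℕ} (h : Even c) : (c : ZMod 2) = 0 := by
  have h1 : c % 2 = 0 := Nat.even_iff.mp h
  rw [← ZMod.natCast_mod c 2, h1, Nat.cast_zero]

/-- A family following `(k,t)`-oddtown rules with `2 ≤ t ≤ k` and `2t - 2 ≤ k`
satisfies `m^(t-1) ≤ (t-1)^(t-1) * (n+1)`. -/
theorem kt_oddtown_bound (n m k t : ℕ) (ht : 2 ≤ t) (htk : t ≤ k)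
    (h2t : 2 * t - 2 ≤ k)
    (A : Fin m → Finset (Fin n)) (hinj : Function.Injective A)
    (hodd : ∀ s : Finset (Fin m), s.Nonempty → s.card < t → Odd ((s.inf A).card))
    (heven : ∀ s : Finset (Fin m), t ≤ s.card → s.card ≤ k → Even ((s.inf A).card)) :
    m ^ (t - 1) ≤ (t - 1) ^ (t - 1) * (n + 1) := by
  -- the key bound : choose m (t-1) ≤ n
  set r := t - 1 with hr
  have hchoose : m.choose r ≤ n := by
    set F := Finset.powersetCard r (Finset.univ : Finset (Fin m)) with hF
    have hcardF : Fintype.card F = m.choose r := by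
      rw [Fintype.card_coe, hF, Finset.card_powersetCard, Finset.card_univ,
        Fintype.card_fin]
    rw [← hcardF]
    apply card_le_of_orthonormal
      (v := fun S : F => fun x => if x ∈ (S : Finset (Fin m)).inf A then (1 : ZMod 2) else 0)
    intro S T
    have hScard : (S : Finset (Fin m)).card = r := (Finset.mem_powersetCard_univ.mp S.2)
    have hTcard : (T : Finset (Fin m)).card = r := (Finset.mem_powersetCard_univ.mp T.2)
    have hdot : (∑ x, (if x ∈ (S : Finset (Fin m)).inf A then (1 : ZMod 2) else 0) *
        (if x ∈ (T : Finset (Fin m)).inf A then (1 : ZMod 2) else 0))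
        = ((((S : Finset (Fin m)) ∪ T).inf A).card : ZMod 2) := by
      have hst : ((S : Finset (Fin m)) ∪ T).inf A
          = (S : Finset (Fin m)).inf A ∩ (T : Finset (Fin m)).inf A := by
        rw [Finset.inf_union, Finset.inf_eq_inter]
      rw [hst]
      simp only [ite_mul, one_mul, zero_mul, ← ite_and, ← Finset.mem_inter]
      rw [Finset.sum_boole]
      have hfil : Finset.filter
          (fun x => x ∈ (S : Finset (Fin m)).inf A ∩ (T : Finset (Fin m)).inf A)
          Finset.univ = (S : Finset (Fin m)).inf A ∩ (T : Finset (Fin m)).inf A := by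
        ext x
        simp
      rw [hfil]
    by_cases hST : S = T
    · subst hST
      simp only [if_true, Finset.union_self] at *
      rw [hdot]
      have hne : (S : Finset (Fin m)).Nonempty := by
        rw [← Finset.card_pos, hScard]; omega
      exact odd_cast_zmod2 (hodd _ hne (by omega))
    · rw [if_neg hST, hdot]
      have hSTne : (S : Finset (Fin m)) ≠ (T : Finset (Fin m)) := by
        exact fun hc => hST (Subtype.ext hc)
      have hnotsub : ¬ ((T : Finset (Fin m)) ⊆ (S : Finset (Fin m))) := by
        intro hc
        exact hSTne ((Finset.eq_of_subset_of_card_le hc (by omega)).symm)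
      obtain ⟨x, hxT, hxS⟩ := Finset.not_subset.mp hnotsub
      have hlow : t ≤ ((S : Finset (Fin m)) ∪ T).card := by
        have h1 : insert x (S : Finset (Fin m)) ⊆ (S : Finset (Fin m)) ∪ T := by
          intro y hy
          rcases Finset.mem_insert.mp hy with h | h
          · exact Finset.mem_union_right _ (h ▸ hxT)
          · exact Finset.mem_union_left _ h
        have h2 := Finset.card_le_card h1
        rw [Finset.card_insert_of_notMem hxS, hScard] at h2
        omega
      have hhigh : ((S : Finset (Fin m)) ∪ T).card ≤ k := by
        have := Finset.card_union_le (S : Finset (Fin m)) T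
        omega
      exact even_cast_zmod2 (heven _ hlow hhigh)
  by_cases hrm : r ≤ m
  · calc m ^ r ≤ r ^ r * m.choose r := pow_le_pow_mul_choose' hrm
      _ ≤ r ^ r * (n + 1) := Nat.mul_le_mul_left _ (by omega)
  · calc m ^ r ≤ r ^ r := Nat.pow_le_pow_left (by omega) r
      _ ≤ r ^ r * (n + 1) := Nat.le_mul_of_pos_right _ (by omega)
end

section
/- Let A_{j,i} ⊆ [n] for j ∈ [k], i ∈ [m] with k ≥ 2 be such that |A_{1,i_1} ∩ ... ∩ A_{k,i_k}| is even if and only if at least 2 of the indices i_1, ..., i_k are distinct. Then the pair of families ({A_{1,i} ∩ ... ∩ A_{k−1,i} : i ∈ [m]}, {A_{k,i} : i ∈ [m]}) is a Bollobás set pair modulo 2, and consequently m ≤ n + 1. -/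
open Finset

lemma pair_bound (n m : ℕ) (C D : Fin m → Finset (Fin n))
    (h : ∀ i i', Even ((C i ∩ D i').card) ↔ i ≠ i') : m ≤ n := by
  classical
  set v : Fin m → (Fin n → ZMod 2) := fun i x => if x ∈ C i then 1 else 0 with hv
  have key : ∀ i j, (∑ x ∈ D j, v i x) = if i = j then (1 : ZMod 2) else 0 := by
    intro i j
    have h1 : (∑ x ∈ D j, v i x) = ((C i ∩ D j).card : ZMod 2) := by
      simp only [hv]
      rw [Finset.sum_ite_mem, Finset.inter_comm]
      simp
    rw [h1]
    by_cases hij : i = j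
    · have hodd : ¬ Even ((C i ∩ D j).card) := by simp [h, hij]
      rw [Nat.not_even_iff] at hodd
      rw [← ZMod.natCast_mod, hodd, hij]
      simp
    · have heven : Even ((C i ∩ D j).card) := (h i j).2 hij
      rw [Nat.even_iff] at heven
      rw [← ZMod.natCast_mod, heven]
      simp [hij]
  have hli : LinearIndependent (ZMod 2) v := by
    rw [Fintype.linearIndependent_iff]
    intro g hg j
    have h0 : ∑ x ∈ D j, (∑ i, g i • v i) x = 0 := by
      rw [hg]; simp
    simp only [Finset.sum_apply, Pi.smul_apply, smul_eq_mul] at h0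
    rw [Finset.sum_comm] at h0
    simp only [← Finset.mul_sum, key, mul_ite, mul_one, mul_zero] at h0
    simpa using h0
  have := hli.fintype_card_le_finrank
  simpa using this

/-- From a Bollobás set `(k,2)`-tuple modulo 2, the families
`C_i = A_{1,i} ∩ ⋯ ∩ A_{k-1,i}` and `D_i = A_{k,i}` form a Bollobás set pair
modulo 2, and consequently `m ≤ n + 1`. -/
theorem bollobas_k2_tuple (n m k : ℕ) (hk : 2 ≤ k)
    (A : Fin k → Fin m → Finset (Fin n))
    (hA : ∀ i : Fin k → Fin m,
      Even ((Finset.inf (Finset.univ : Finset (Fin k)) fun j => A j (i j)).card) ↔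
        2 ≤ ((Finset.univ : Finset (Fin k)).image i).card) :
    (∀ i i' : Fin m,
      Even (((Finset.inf ((Finset.univ : Finset (Fin k)).filter
          fun j => j ≠ (⟨k - 1, by omega⟩ : Fin k)) fun j => A j i) ∩
          A (⟨k - 1, by omega⟩ : Fin k) i').card) ↔ i ≠ i') ∧
    m ≤ n + 1 := by
  classical
  set last : Fin k := ⟨k - 1, by omega⟩ with hlast
  have hpair : ∀ i i' : Fin m,
      Even (((Finset.inf ((Finset.univ : Finset (Fin k)).filter
          fun j => j ≠ last) fun j => A j i) ∩ A last i').card) ↔ i ≠ i' := by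
    intro i i'
    set f : Fin k → Fin m := fun j => if j = last then i' else i with hf
    have huniv : (Finset.univ : Finset (Fin k)) =
        insert last ((Finset.univ : Finset (Fin k)).filter fun j => j ≠ last) := by
      ext j
      by_cases hj : j = last <;> simp [hj]
    have hset : (Finset.inf (Finset.univ : Finset (Fin k)) fun j => A j (f j)) =
        (Finset.inf ((Finset.univ : Finset (Fin k)).filter
          fun j => j ≠ last) fun j => A j i) ∩ A last i' := by
      conv_lhs => rw [huniv]
      rw [Finset.inf_insert]
      have : (Finset.inf ((Finset.univ : Finset (Fin k)).filter
          fun j => j ≠ last) fun j => A j (f j)) =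
          (Finset.inf ((Finset.univ : Finset (Fin k)).filter
          fun j => j ≠ last) fun j => A j i) := by
        apply Finset.inf_congr rfl
        intro j hj
        simp only [Finset.mem_filter] at hj
        simp [hf, hj.2]
      rw [this]
      have hfl : f last = i' := if_pos rfl
      rw [hfl, Finset.inf_eq_inter]
      exact Finset.inter_comm _ _
    have himg : 2 ≤ ((Finset.univ : Finset (Fin k)).image f).card ↔ i ≠ i' := by
      constructor
      · intro h2 hii
        have : (Finset.univ : Finset (Fin k)).image f ⊆ {i} := by
          intro x hx
          simp only [Finset.mem_image] at hx
          obtain ⟨j, _, rfl⟩ := hx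
          simp only [hf]
          split_ifs <;> simp [hii]
        have := Finset.card_le_card this
        simp at this
        omega
      · intro hii
        have h0 : (⟨0, by omega⟩ : Fin k) ≠ last := by
          simp [hlast, Fin.ext_iff]
          omega
        rw [show (2 : ℕ) = 1 + 1 from rfl, Nat.succ_le_iff, Finset.one_lt_card]
        refine ⟨i, ?_, i', ?_, hii⟩
        · exact Finset.mem_image.2 ⟨⟨0, by omega⟩, Finset.mem_univ _, by simp [hf, h0]⟩
        · exact Finset.mem_image.2 ⟨last, Finset.mem_univ _, by simp [hf]⟩
    rw [← hset, hA f, himg]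
  refine ⟨hpair, ?_⟩
  have := pair_bound n m
    (fun i => Finset.inf ((Finset.univ : Finset (Fin k)).filter
      fun j => j ≠ last) fun j => A j i) (fun i' => A last i') hpair
  omega
end

section
/- Let {C_i : i ∈ [t]} be complete 2k-partite 2k-graphs forming a modulo 2 cover of H_{2k,2k}(n) (the ordered tuples in [n]^{2k} with all 2k coordinates distinct). Then the ordered Kneser graph OK_{n:k}, whose vertices are ordered k-tuples of distinct elements of [n] and whose edges join tuples with disjoint underlying sets, admits a modulo 2 biclique cover of size t. -/
/-- From a modulo 2 cover of `H_{2k,2k}(n)` by `t` complete `2k`-partite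
`2k`-graphs, one obtains a modulo 2 biclique cover of the ordered Kneser graph
`OK_{n:k}` of size `t`: each pair of vertices is covered an odd number of times
iff the underlying `k`-sets are disjoint. -/
theorem mod_two_biclique_cover_ordered_kneser (n k t : ℕ) (hk : 1 ≤ k)
    (C : Fin t → Fin (2 * k) → Finset (Fin n))
    (hcov : ∀ e : Fin (2 * k) → Fin n,
      Odd ((Finset.univ.filter fun c : Fin t => ∀ j, e j ∈ C c j).card) ↔
        Function.Injective e) :
    ∃ P Q : Fin t → Finset {f : Fin k → Fin n // Function.Injective f},
      ∀ u v : {f : Fin k → Fin n // Function.Injective f},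
        (Odd ((Finset.univ.filter fun c : Fin t => u ∈ P c ∧ v ∈ Q c).card) ↔
          ∀ a b : Fin k, u.1 a ≠ v.1 b) := by
  refine ⟨fun c => Finset.univ.filter fun u =>
      ∀ a : Fin k, u.1 a ∈ C c ⟨a, by omega⟩,
    fun c => Finset.univ.filter fun v =>
      ∀ a : Fin k, v.1 a ∈ C c ⟨k + a, by omega⟩, ?_⟩
  intro u v
  set e : Fin (2 * k) → Fin n := fun j =>
    if h : (j : ℕ) < k then u.1 ⟨j, h⟩ else v.1 ⟨(j : ℕ) - k, by omega⟩ with he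
  have hmem : ∀ c : Fin t,
      ((u ∈ Finset.univ.filter fun u : {f : Fin k → Fin n // Function.Injective f} =>
          ∀ a : Fin k, u.1 a ∈ C c ⟨a, by omega⟩) ∧
        (v ∈ Finset.univ.filter fun v : {f : Fin k → Fin n // Function.Injective f} =>
          ∀ a : Fin k, v.1 a ∈ C c ⟨k + a, by omega⟩)) ↔ ∀ j, e j ∈ C c j := by
    intro c
    simp only [Finset.mem_filter, Finset.mem_univ, true_and]
    constructor
    · rintro ⟨h1, h2⟩ j
      by_cases h : (j : ℕ) < k
      · have := h1 ⟨j, h⟩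
        simp only [he, dif_pos h]
        convert this using 2 <;> (ext; simp; try omega)
      · have := h2 ⟨(j : ℕ) - k, by omega⟩
        simp only [he, dif_neg h]
        convert this using 2 <;> (ext; simp; try omega)
    · intro h
      constructor
      · intro a
        have := h ⟨a, by omega⟩
        simpa only [he, dif_pos a.isLt] using this
      · intro a
        have := h ⟨k + a, by omega⟩
        have hna : ¬ ((k + (a : ℕ)) < k) := by omega
        simp only [he, dif_neg hna] at this
        convert this using 2 <;> (ext; simp; try omega)
  have hfil : (Finset.univ.filter fun c : Fin t =>
      (u ∈ Finset.univ.filter fun u : {f : Fin k → Fin n // Function.Injective f} =>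
          ∀ a : Fin k, u.1 a ∈ C c ⟨a, by omega⟩) ∧
        (v ∈ Finset.univ.filter fun v : {f : Fin k → Fin n // Function.Injective f} =>
          ∀ a : Fin k, v.1 a ∈ C c ⟨k + a, by omega⟩)) =
      Finset.univ.filter fun c : Fin t => ∀ j, e j ∈ C c j := by
    apply Finset.filter_congr
    intro c _
    exact (by simpa using hmem c)
  rw [hfil, hcov e]
  constructor
  · intro hinj a b hab
    have h1 : e ⟨a, by omega⟩ = u.1 a := by
      simp only [he, dif_pos a.isLt]
    have h2 : e ⟨k + b, by omega⟩ = v.1 b := by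
      have hnb : ¬ ((k + (b : ℕ)) < k) := by omega
      simp only [he, dif_neg hnb]
      congr 1
      ext; simp
    have := hinj (a₁ := ⟨a, by omega⟩) (a₂ := ⟨k + b, by omega⟩)
      (by rw [h1, h2, hab])
    have := Fin.val_eq_val _ _ |>.2 this
    simp at this
    omega
  · intro hd j1 j2 hj
    by_cases h1 : (j1 : ℕ) < k <;> by_cases h2 : (j2 : ℕ) < k
    · simp only [he, dif_pos h1, dif_pos h2] at hj
      have := u.2 hj
      have := Fin.mk.inj_iff.1 this
      exact Fin.ext this
    · simp only [he, dif_pos h1, dif_neg h2] at hj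
      exact absurd hj (hd _ _)
    · simp only [he, dif_neg h1, dif_pos h2] at hj
      exact absurd hj.symm (hd _ _)
    · simp only [he, dif_neg h1, dif_neg h2] at hj
      have := v.2 hj
      have := Fin.mk.inj_iff.1 this
      have : (j1 : ℕ) = j2 := by omega
      exact Fin.ext this
end

section
/- Let G be a graph and suppose bicliques B_1, ..., B_t cover each edge of G an odd number of times and each non-edge an even number of times. Then t ≥ (1/2) · rank_{F_2}(A(G)), where A(G) is the adjacency matrix of G over F_2. -/
/-- If bicliques `(P c, Q c)`, `c ∈ [t]`, cover each edge of `G` an odd number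
of times and each non-edge an even number of times, then
`t ≥ (1/2)·rank_{F₂}(A(G))`. -/
theorem biclique_mod_two_cover_rank_bound {V : Type*} [Fintype V] [DecidableEq V]
    (G : SimpleGraph V) [DecidableRel G.Adj] (t : ℕ)
    (P Q : Fin t → Finset V) (hd : ∀ c, Disjoint (P c) (Q c))
    (hcov : ∀ u v : V,
      (Odd ((Finset.univ.filter fun c : Fin t =>
        (u ∈ P c ∧ v ∈ Q c) ∨ (u ∈ Q c ∧ v ∈ P c)).card) ↔ G.Adj u v)) :
    (G.adjMatrix (ZMod 2)).rank ≤ 2 * t := by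
  classical
  set X : Matrix V (Fin t ⊕ Fin t) (ZMod 2) := fun u i =>
    Sum.elim (fun c => if u ∈ P c then 1 else 0) (fun c => if u ∈ Q c then 1 else 0) i with hX
  set Y : Matrix (Fin t ⊕ Fin t) V (ZMod 2) := fun i v =>
    Sum.elim (fun c => if v ∈ Q c then 1 else 0) (fun c => if v ∈ P c then 1 else 0) i with hY
  have key : G.adjMatrix (ZMod 2) = X * Y := by
    ext u v
    have hdisj : ∀ c : Fin t, ¬((u ∈ P c ∧ v ∈ Q c) ∧ (u ∈ Q c ∧ v ∈ P c)) := by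
      rintro c ⟨⟨h1, _⟩, ⟨h2, _⟩⟩
      exact Finset.disjoint_left.mp (hd c) h1 h2
    have hmul : (X * Y) u v =
        ((Finset.univ.filter fun c : Fin t => u ∈ P c ∧ v ∈ Q c).card
          + (Finset.univ.filter fun c : Fin t => u ∈ Q c ∧ v ∈ P c).card : ℕ) := by
      rw [Matrix.mul_apply]
      simp only [Matrix.mul_apply, hX, hY, Fintype.sum_sum_type, Sum.elim_inl, Sum.elim_inr,
        ite_mul, one_mul, zero_mul, mul_ite, mul_one, mul_zero]
      push_cast
      rw [Finset.card_filter, Finset.card_filter]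
      push_cast
      congr 1 <;> apply Finset.sum_congr rfl <;> intro c _ <;>
        by_cases h1 : u ∈ P c <;> by_cases h2 : v ∈ Q c <;>
        by_cases h3 : u ∈ Q c <;> by_cases h4 : v ∈ P c <;> simp [h1, h2, h3, h4]
    have hcard : (Finset.univ.filter fun c : Fin t => u ∈ P c ∧ v ∈ Q c).card
        + (Finset.univ.filter fun c : Fin t => u ∈ Q c ∧ v ∈ P c).card
        = (Finset.univ.filter fun c : Fin t =>
            (u ∈ P c ∧ v ∈ Q c) ∨ (u ∈ Q c ∧ v ∈ P c)).card := by
      rw [← Finset.card_union_of_disjoint, Finset.filter_or]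
      rw [Finset.disjoint_filter]
      intro c _ h1 h2
      exact hdisj c ⟨h1, h2⟩
    rw [hmul, hcard]
    by_cases h : G.Adj u v
    · obtain ⟨k, hk⟩ := (hcov u v).mpr h
      rw [hk]
      push_cast
      rw [SimpleGraph.adjMatrix_apply, if_pos h]
      ring_nf
      have h2 : (2 : ZMod 2) = 0 := by decide
      rw [h2]; ring
    · have : ¬ Odd ((Finset.univ.filter fun c : Fin t =>
        (u ∈ P c ∧ v ∈ Q c) ∨ (u ∈ Q c ∧ v ∈ P c)).card) := fun ho => h ((hcov u v).mp ho)
      obtain ⟨k, hk⟩ := Nat.not_odd_iff_even.mp this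
      rw [hk]
      push_cast
      rw [SimpleGraph.adjMatrix_apply, if_neg h]
      ring_nf
      have h2 : (2 : ZMod 2) = 0 := by decide
      rw [h2]; ring
  rw [key]
  calc (X * Y).rank ≤ Y.rank := Matrix.rank_mul_le_right X Y
    _ ≤ Fintype.card (Fin t ⊕ Fin t) := Matrix.rank_le_card_height Y
    _ = 2 * t := by simp [two_mul]
end

section
/- For all t ≥ 2, the number of set partitions of [k] into at most t−1 parts, weighted by falling factorials, satisfies Σ_{π : |π| ≤ t−1} n(n−1)⋯(n−|π|+2) ≤ (S(k,t−1) + ... + S(k,1)) n^{t−2+1}, and in particular f_{k,t}(n) ≤ 1 + (S(k,t) + o(1)) n^{t−1} ≤ (t^k/t! + o(1)) n^{t−1}, where S(k,t) is the Stirling number of the second kind. -/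
open Finset

/-- Stirling numbers of the second kind. -/
def stirling2 : ℕ → ℕ → ℕ
  | 0, 0 => 1
  | 0, _ + 1 => 0
  | _ + 1, 0 => 0
  | k + 1, j + 1 => (j + 1) * stirling2 k (j + 1) + stirling2 k j

lemma stirling2_eq_zero : ∀ {k t : ℕ}, k < t → stirling2 k t = 0
  | 0, 0, h => by omega
  | 0, t + 1, _ => rfl
  | k + 1, 0, h => by omega
  | k + 1, t + 1, h => by
      show (t + 1) * stirling2 k (t + 1) + stirling2 k t = 0
      rw [stirling2_eq_zero (by omega), stirling2_eq_zero (by omega)]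
      ring

lemma stirling2_self : ∀ k : ℕ, stirling2 k k = 1
  | 0 => rfl
  | k + 1 => by
      show (k + 1) * stirling2 k (k + 1) + stirling2 k k = 1
      rw [stirling2_eq_zero (by omega), stirling2_self k]
      ring

lemma stirling2_pos : ∀ k t : ℕ, 0 < t → t ≤ k → 0 < stirling2 k t
  | 0, t, h1, h2 => by omega
  | k + 1, t + 1, h1, h2 => by
      show 0 < (t + 1) * stirling2 k (t + 1) + stirling2 k t
      rcases Nat.lt_or_ge (t + 1) (k + 1) with h | h
      · have := stirling2_pos k (t + 1) (by omega) (by omega)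
        positivity
      · have : t = k := by omega
        subst this
        rw [stirling2_self]
        omega

/-- the mod 2 coefficient of the size-`s` boxes. -/
def cvec (n d s : ℕ) : Prop := Odd (∑ s' ∈ Finset.Icc s d, (n - s).choose (s' - s))

instance (n d s : ℕ) : Decidable (cvec n d s) := by unfold cvec; infer_instance

/-- the family of boxes (bases). -/
def Fam (n d : ℕ) : Finset (Finset (Fin n)) :=
  Finset.univ.filter fun S => 1 ≤ S.card ∧ S.card ≤ d ∧ cvec n d S.card

lemma card_supersets {n : ℕ} (I : Finset (Fin n)) (s : ℕ) (hrs : I.card ≤ s) :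
    (Finset.univ.filter fun S : Finset (Fin n) => I ⊆ S ∧ S.card = s).card
      = (n - I.card).choose (s - I.card) := by
  have h : (Finset.univ.filter fun S : Finset (Fin n) => I ⊆ S ∧ S.card = s).card
      = (Finset.powersetCard (s - I.card) Iᶜ).card := by
    apply Finset.card_bij' (fun S _ => S \ I) (fun T _ => T ∪ I)
    · intro S hS
      simp only [mem_filter, mem_univ, true_and] at hS
      rw [Finset.mem_powersetCard]
      constructor
      · intro a ha
        simp only [Finset.mem_sdiff] at ha
        simp [Finset.mem_compl, ha.2]
      · rw [Finset.card_sdiff_of_subset hS.1, hS.2]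
    · intro T hT
      rw [Finset.mem_powersetCard] at hT
      simp only [mem_filter, mem_univ, true_and]
      have hdisj : Disjoint T I := by
        rw [Finset.disjoint_left]
        intro a haT haI
        have := hT.1 haT
        simp [Finset.mem_compl] at this
        exact this haI
      constructor
      · exact Finset.subset_union_right
      · rw [Finset.card_union_of_disjoint hdisj, hT.2]
        omega
    · intro S hS
      simp only [mem_filter, mem_univ, true_and] at hS
      exact Finset.sdiff_union_of_subset hS.1
    · intro T hT
      rw [Finset.mem_powersetCard] at hT
      have hdisj : Disjoint T I := by
        rw [Finset.disjoint_left]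
        intro a haT haI
        have := hT.1 haT
        simp [Finset.mem_compl] at this
        exact this haI
      rw [Finset.union_sdiff_distrib, Finset.sdiff_self, Finset.union_empty,
        Finset.sdiff_eq_self_of_disjoint hdisj]
  rw [h, Finset.card_powersetCard, Finset.card_compl, Fintype.card_fin]

/-- subset-of-subset Vandermonde-type identity. -/
lemma key_sum (m q : ℕ) :
    ∑ u ∈ Finset.range (q + 1), m.choose u * (m - u).choose (q - u) = 2 ^ q * m.choose q := by
  rcases le_or_gt q m with h | h
  · have : ∀ u ∈ Finset.range (q + 1),
        m.choose u * (m - u).choose (q - u) = m.choose q * q.choose u := by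
      intro u hu
      rw [Finset.mem_range] at hu
      rw [← Nat.choose_mul (n := m) (by omega : u ≤ q)]
    rw [Finset.sum_congr rfl this, ← Finset.mul_sum, Nat.sum_range_choose, mul_comm]
  · have h1 : ∀ u ∈ Finset.range (q + 1), m.choose u * (m - u).choose (q - u) = 0 := by
      intro u hu
      rw [Finset.mem_range] at hu
      rcases le_or_gt u m with h2 | h2
      · rw [Nat.choose_eq_zero_of_lt (show m - u < q - u by omega), mul_zero]
      · rw [Nat.choose_eq_zero_of_lt h2, zero_mul]
    rw [Finset.sum_congr rfl h1, Finset.sum_const, Nat.choose_eq_zero_of_lt h, mul_zero, smul_zero]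

lemma inner_eq (n r s' : ℕ) (hr : r ≤ s') :
    ∑ s ∈ Finset.Icc r s', (n - r).choose (s - r) * (n - s).choose (s' - s)
      = 2 ^ (s' - r) * (n - r).choose (s' - r) := by
  have h0 : Finset.Icc r s' = Finset.Ico r (s' + 1) := by
    rw [Finset.Ico_add_one_right_eq_Icc]
  rw [h0, Finset.sum_Ico_eq_sum_range]
  have h1 : s' + 1 - r = (s' - r) + 1 := by omega
  rw [h1]
  have h2 : ∀ u ∈ Finset.range ((s' - r) + 1),
      (n - r).choose (r + u - r) * (n - (r + u)).choose (s' - (r + u))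
        = (n - r).choose u * ((n - r) - u).choose ((s' - r) - u) := by
    intro u hu
    congr 1
    · congr 1; omega
    · congr 1 <;> omega
  rw [Finset.sum_congr rfl h2, key_sum]

lemma covered_zero {n d : ℕ} (I : Finset (Fin n)) (h : d < I.card) :
    ((Fam n d).filter fun S => I ⊆ S).card = 0 := by
  rw [Finset.card_eq_zero, Finset.filter_eq_empty_iff]
  intro S hS hsub
  rw [Fam, mem_filter] at hS
  have := Finset.card_le_card hsub
  omega

lemma covered_odd {n d : ℕ} (I : Finset (Fin n)) (h1 : 1 ≤ I.card) (h2 : I.card ≤ d) :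
    Odd ((Fam n d).filter fun S => I ⊆ S).card := by
  set r := I.card with hr
  -- fiberwise decomposition by cardinality
  have hfib : ((Fam n d).filter fun S => I ⊆ S).card
      = ∑ s ∈ Finset.Icc r d, (((Fam n d).filter fun S => I ⊆ S).filter
          fun S => S.card = s).card := by
    apply Finset.card_eq_sum_card_fiberwise
    intro S hS
    simp only [Fam, Finset.mem_coe, mem_filter, mem_univ, true_and] at hS
    rw [Finset.mem_coe, Finset.mem_Icc]
    exact ⟨Finset.card_le_card hS.2, hS.1.2.1⟩
  have hfiber : ∀ s ∈ Finset.Icc r d,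
      (((Fam n d).filter fun S => I ⊆ S).filter fun S => S.card = s).card
        = if cvec n d s then (n - r).choose (s - r) else 0 := by
    intro s hs
    rw [Finset.mem_Icc] at hs
    by_cases hc : cvec n d s
    · rw [if_pos hc, ← card_supersets I s hs.1]
      congr 1
      ext S
      simp only [Fam, mem_filter, mem_univ, true_and]
      constructor
      · rintro ⟨⟨_, hIS⟩, hcard⟩
        exact ⟨hIS, hcard⟩
      · rintro ⟨hIS, hcard⟩
        exact ⟨⟨⟨by omega, by omega, by rwa [hcard]⟩, hIS⟩, hcard⟩
    · rw [if_neg hc]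
      rw [Finset.card_eq_zero, Finset.filter_eq_empty_iff]
      rintro S hS hcard
      simp only [mem_filter, Fam, mem_univ, true_and] at hS
      rw [hcard] at hS
      exact hc hS.1.2.2
  rw [hfib, Finset.sum_congr rfl hfiber]
  -- now pass to ZMod 2
  rw [← ZMod.natCast_eq_one_iff_odd]
  push_cast
  have hterm : ∀ s ∈ Finset.Icc r d,
      (if cvec n d s then ((n - r).choose (s - r) : ZMod 2) else 0)
        = ((∑ s' ∈ Finset.Icc s d, (n - s).choose (s' - s) : ℕ) : ZMod 2)
            * ((n - r).choose (s - r) : ZMod 2) := by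
    intro s _
    by_cases hc : cvec n d s
    · rw [if_pos hc, ZMod.natCast_eq_one_iff_odd.2 hc, one_mul]
    · rw [if_neg hc, ZMod.natCast_eq_zero_iff_even.2 (Nat.not_odd_iff_even.1 hc), zero_mul]
  rw [Finset.sum_congr rfl hterm]
  have hstep1 : ∀ s ∈ Finset.Icc r d,
      ((∑ s' ∈ Finset.Icc s d, (n - s).choose (s' - s) : ℕ) : ZMod 2)
          * ((n - r).choose (s - r) : ZMod 2)
        = ((∑ s' ∈ Finset.Icc s d,
            (n - r).choose (s - r) * (n - s).choose (s' - s) : ℕ) : ZMod 2) := by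
    intro s _
    push_cast
    rw [Finset.sum_mul]
    exact Finset.sum_congr rfl fun s' _ => mul_comm _ _
  rw [Finset.sum_congr rfl hstep1, ← Nat.cast_sum]
  have hswap : (∑ s ∈ Finset.Icc r d, ∑ s' ∈ Finset.Icc s d,
        (n - r).choose (s - r) * (n - s).choose (s' - s))
      = ∑ s' ∈ Finset.Icc r d, ∑ s ∈ Finset.Icc r s',
        (n - r).choose (s - r) * (n - s).choose (s' - s) := by
    simp only [← Finset.Ico_add_one_right_eq_Icc]
    exact Finset.sum_Ico_Ico_comm r (d + 1) _
  rw [hswap]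
  have hinner : ∀ s' ∈ Finset.Icc r d,
      (∑ s ∈ Finset.Icc r s', (n - r).choose (s - r) * (n - s).choose (s' - s))
        = 2 ^ (s' - r) * (n - r).choose (s' - r) := by
    intro s' hs'
    rw [Finset.mem_Icc] at hs'
    exact inner_eq n r s' hs'.1
  rw [Finset.sum_congr rfl hinner, Nat.cast_sum]
  rw [Finset.sum_eq_single r]
  · norm_num
  · intro s' hs' hne
    rw [Finset.mem_Icc] at hs'
    push_cast
    have h2 : (2 : ZMod 2) = 0 := by decide
    rw [h2, zero_pow (by omega : s' - r ≠ 0), zero_mul]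
  · intro hmem
    rw [Finset.mem_Icc] at hmem
    omega

lemma filter_equivFin_card {α : Type*} [DecidableEq α] (F : Finset α) (p : α → Prop)
    [DecidablePred p] :
    (Finset.univ.filter fun i : Fin F.card => p ((F.equivFin.symm i) : α)).card
      = (F.filter p).card := by
  refine Finset.card_bij' (fun i _ => ((F.equivFin.symm i) : α))
    (fun S hS => F.equivFin ⟨S, Finset.mem_of_mem_filter S hS⟩) ?_ ?_ ?_ ?_
  · intro i hi
    rw [mem_filter] at hi ⊢
    exact ⟨(F.equivFin.symm i).2, hi.2⟩
  · intro S hS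
    rw [mem_filter]
    refine ⟨mem_univ _, ?_⟩
    have hp : p S := (Finset.mem_filter.1 hS).2
    simpa using hp
  · intro i hi
    simp
  · intro S hS
    simp

/-- `Y` is a modulo 2 cover of `H_{k,t}(n)` by complete `k`-partite `k`-graphs:
each tuple with at least `t` distinct coordinates is covered an odd number of
times, every other tuple an even number of times. -/
def IsMod2Cover (n k t m : ℕ) (Y : Fin m → Fin k → Finset (Fin n)) : Prop :=
  ∀ e : Fin k → Fin n,
    Odd ((Finset.univ.filter fun c : Fin m => ∀ j, e j ∈ Y c j).card) ↔
      t ≤ ((Finset.univ : Finset (Fin k)).image e).card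

/-- `f_{k,t}(n)`: the minimum size of a modulo 2 cover of `H_{k,t}(n)`. -/
noncomputable def fkt (k t n : ℕ) : ℕ :=
  sInf {m | ∃ Y : Fin m → Fin k → Finset (Fin n), IsMod2Cover n k t m Y}

lemma fkt_le_card (n k t : ℕ) (hk : 1 ≤ k) (ht : 2 ≤ t) :
    fkt k t n ≤ (Fam n (t - 1)).card + 1 := by
  classical
  set d := t - 1 with hd
  set F := Fam n d with hF
  set N := F.card with hN
  have hNe : Nonempty (Fin k) := ⟨⟨0, by omega⟩⟩
  set Y : Fin (N + 1) → Fin k → Finset (Fin n) :=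
    fun i _ => if h : (i : ℕ) < N
      then ((F.equivFin.symm ⟨(i : ℕ), h⟩ : {S // S ∈ F}) : Finset (Fin n))
      else Finset.univ with hY
  have hcover : IsMod2Cover n k t (N + 1) Y := by
    intro e
    set I := Finset.univ.image e with hI
    have hI1 : 1 ≤ I.card := Finset.card_pos.2 (Finset.image_nonempty.2 Finset.univ_nonempty)
    have hcount : (Finset.univ.filter fun c : Fin (N + 1) => ∀ j, e j ∈ Y c j).card
        = ((F.filter fun S => I ⊆ S).card) + 1 := by
      rw [Finset.card_filter, Fin.sum_univ_castSucc]
      have hlast : (if (∀ j, e j ∈ Y (Fin.last N) j) then 1 else 0) = 1 := by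
        simp [hY, Fin.val_last]
      rw [hlast]
      congr 1
      have hcs : ∀ (i : Fin N), (∀ j, e j ∈ Y i.castSucc j) ↔
          I ⊆ ((F.equivFin.symm i : {S // S ∈ F}) : Finset (Fin n)) := by
        intro i
        simp only [hY, Fin.coe_castSucc, i.isLt, dif_pos, Fin.eta]
        rw [hI, Finset.image_subset_iff]
        simp
      calc (∑ i : Fin N, if (∀ j, e j ∈ Y i.castSucc j) then 1 else 0)
          = ∑ i : Fin N,
              if I ⊆ ((F.equivFin.symm i : {S // S ∈ F}) : Finset (Fin n)) then 1 else 0 :=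
            Finset.sum_congr rfl fun i _ => by
              by_cases hP : ∀ j, e j ∈ Y i.castSucc j
              · rw [if_pos hP, if_pos ((hcs i).1 hP)]
              · rw [if_neg hP, if_neg fun hs => hP ((hcs i).2 hs)]
        _ = (Finset.univ.filter fun i : Fin N =>
              I ⊆ ((F.equivFin.symm i : {S // S ∈ F}) : Finset (Fin n))).card :=
            (Finset.card_filter _ _).symm
        _ = (F.filter fun S => I ⊆ S).card := filter_equivFin_card F _
    rw [hcount, Nat.odd_add_one, Nat.not_odd_iff_even]
    by_cases hts : t ≤ I.card
    · have h0 : ((F.filter fun S => I ⊆ S)).card = 0 := covered_zero I (by omega)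
      rw [h0]
      simpa using hts
    · have hodd := covered_odd I hI1 (by omega : I.card ≤ d)
      exact iff_of_false (Nat.not_even_iff_odd.2 hodd) hts
  exact Nat.sInf_le ⟨Y, hcover⟩

lemma Fam_card_le (n d : ℕ) (hn : 1 ≤ n) (hd : 1 ≤ d) :
    (Fam n d).card ≤ (d - 1) * n ^ (d - 1) + n ^ d := by
  have h1 : (Fam n d).card
      = ∑ s ∈ Finset.Icc 1 d, ((Fam n d).filter fun S => S.card = s).card := by
    apply Finset.card_eq_sum_card_fiberwise
    intro S hS
    simp only [Fam, Finset.mem_coe, mem_filter, mem_univ, true_and] at hS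
    rw [Finset.mem_coe, Finset.mem_Icc]
    exact ⟨hS.1, hS.2.1⟩
  have h2 : ∀ s ∈ Finset.Icc 1 d, ((Fam n d).filter fun S => S.card = s).card ≤ n ^ s := by
    intro s _
    have hsub : ((Fam n d).filter fun S => S.card = s)
        ⊆ Finset.powersetCard s (Finset.univ : Finset (Fin n)) := by
      intro S hS
      rw [Finset.mem_powersetCard]
      exact ⟨Finset.subset_univ S, (Finset.mem_filter.1 hS).2⟩
    calc ((Fam n d).filter fun S => S.card = s).card
        ≤ (Finset.powersetCard s (Finset.univ : Finset (Fin n))).card :=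
          Finset.card_le_card hsub
      _ = n.choose s := by rw [Finset.card_powersetCard, Finset.card_univ, Fintype.card_fin]
      _ ≤ n ^ s := Nat.choose_le_pow n s
  have hins : Finset.Icc 1 d = insert d (Finset.Icc 1 (d - 1)) := by
    ext x
    simp only [Finset.mem_insert, Finset.mem_Icc]
    omega
  calc (Fam n d).card ≤ ∑ s ∈ Finset.Icc 1 d, n ^ s := h1 ▸ Finset.sum_le_sum h2
    _ = n ^ d + ∑ s ∈ Finset.Icc 1 (d - 1), n ^ s := by
        rw [hins, Finset.sum_insert (by simp [Finset.mem_Icc]; omega)]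
    _ ≤ n ^ d + ∑ _s ∈ Finset.Icc 1 (d - 1), n ^ (d - 1) := by
        apply Nat.add_le_add_left
        apply Finset.sum_le_sum
        intro s hs
        rw [Finset.mem_Icc] at hs
        exact Nat.pow_le_pow_right hn hs.2
    _ = n ^ d + (d - 1) * n ^ (d - 1) := by
        rw [Finset.sum_const, Nat.card_Icc, smul_eq_mul]
        norm_num
    _ = (d - 1) * n ^ (d - 1) + n ^ d := by ring

/-- Grouping set partitions of `[k]` with at most `t-1` parts by their number
of parts, `∑_{j=1}^{t-1} S(k,j)·n(n-1)⋯(n-j+2) ≤ (S(k,t-1)+⋯+S(k,1))·n^{t-1}`;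
in particular `f_{k,t}(n) ≤ 1 + (S(k,t) + o(1))·n^{t-1} ≤ (t^k/t! + o(1))·n^{t-1}`. -/
theorem fkt_upper (k t : ℕ) (ht : 2 ≤ t) (htk : t ≤ k) :
    (∀ n : ℕ, 1 ≤ n →
      ∑ j ∈ Finset.Icc 1 (t - 1), stirling2 k j * n.descFactorial (j - 1) ≤
        (∑ j ∈ Finset.Icc 1 (t - 1), stirling2 k j) * n ^ (t - 2 + 1)) ∧
    (∀ ε : ℝ, 0 < ε → ∃ N : ℕ, ∀ n : ℕ, N ≤ n →
      (fkt k t n : ℝ) ≤ 1 + ((stirling2 k t : ℝ) + ε) * (n : ℝ) ^ (t - 1) ∧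
      (fkt k t n : ℝ) ≤ ((t : ℝ) ^ k / (Nat.factorial t : ℝ) + ε) * (n : ℝ) ^ (t - 1)) := by
  constructor
  · intro n hn
    have hterm : ∀ j ∈ Finset.Icc 1 (t - 1),
        stirling2 k j * n.descFactorial (j - 1) ≤ stirling2 k j * n ^ (t - 2 + 1) := by
      intro j hj
      rw [Finset.mem_Icc] at hj
      apply Nat.mul_le_mul_left
      calc n.descFactorial (j - 1) ≤ n ^ (j - 1) := Nat.descFactorial_le_pow n (j - 1)
        _ ≤ n ^ (t - 2 + 1) := Nat.pow_le_pow_right hn (by omega)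
    calc ∑ j ∈ Finset.Icc 1 (t - 1), stirling2 k j * n.descFactorial (j - 1)
        ≤ ∑ j ∈ Finset.Icc 1 (t - 1), stirling2 k j * n ^ (t - 2 + 1) :=
          Finset.sum_le_sum hterm
      _ = (∑ j ∈ Finset.Icc 1 (t - 1), stirling2 k j) * n ^ (t - 2 + 1) :=
          (Finset.sum_mul _ _ _).symm
  · intro ε hε
    refine ⟨⌈2 / ε⌉₊ + ⌈(2 * t : ℝ) / ε⌉₊ + 1, fun n hn => ?_⟩
    have hn1 : 1 ≤ n := by omega
    have hnR : (1 : ℝ) ≤ (n : ℝ) := by exact_mod_cast hn1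
    have h2e : 2 / ε ≤ (n : ℝ) := by
      have h : (⌈2 / ε⌉₊ : ℝ) ≤ (n : ℝ) := by exact_mod_cast (by omega : ⌈2 / ε⌉₊ ≤ n)
      exact (Nat.le_ceil _).trans h
    have h2t : (2 * t : ℝ) / ε ≤ (n : ℝ) := by
      have h : (⌈(2 * t : ℝ) / ε⌉₊ : ℝ) ≤ (n : ℝ) := by
        exact_mod_cast (by omega : ⌈(2 * t : ℝ) / ε⌉₊ ≤ n)
      exact (Nat.le_ceil _).trans h
    set d := t - 1 with hd
    have hd1 : 1 ≤ d := by omega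
    have hchain : (fkt k t n : ℝ)
        ≤ ((d - 1 : ℕ) : ℝ) * (n : ℝ) ^ (d - 1) + (n : ℝ) ^ d + 1 := by
      have hle : fkt k t n ≤ (d - 1) * n ^ (d - 1) + n ^ d + 1 :=
        (fkt_le_card n k t (by omega) ht).trans
          (Nat.add_le_add_right (Fam_card_le n d hn1 hd1) 1)
      calc (fkt k t n : ℝ) ≤ (((d - 1) * n ^ (d - 1) + n ^ d + 1 : ℕ) : ℝ) := by
            exact_mod_cast hle
        _ = ((d - 1 : ℕ) : ℝ) * (n : ℝ) ^ (d - 1) + (n : ℝ) ^ d + 1 := by push_cast; ring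
    have hn0 : (0 : ℝ) ≤ (n : ℝ) := by linarith
    have hpowd : (0 : ℝ) ≤ (n : ℝ) ^ d := pow_nonneg hn0 d
    have hkey : (fkt k t n : ℝ) ≤ (1 + ε) * (n : ℝ) ^ d := by
      have hp1 : (1 : ℝ) ≤ ε / 2 * (n : ℝ) ^ d := by
        have hnd : (n : ℝ) ≤ (n : ℝ) ^ d := le_self_pow₀ hnR (by omega)
        have h2 : (2 : ℝ) ≤ ε * (n : ℝ) := by
          rw [div_le_iff₀ hε] at h2e
          linarith
        nlinarith
      have hp2 : ((d - 1 : ℕ) : ℝ) * (n : ℝ) ^ (d - 1) ≤ ε / 2 * (n : ℝ) ^ d := by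
        have hdt : ((d - 1 : ℕ) : ℝ) ≤ (t : ℝ) := by
          have : (d - 1 : ℕ) ≤ t := by omega
          exact_mod_cast this
        have hdn : ((d - 1 : ℕ) : ℝ) ≤ ε / 2 * (n : ℝ) := by
          rw [div_le_iff₀ hε] at h2t
          linarith
        have hpow : (n : ℝ) ^ d = (n : ℝ) * (n : ℝ) ^ (d - 1) := by
          rw [← pow_succ']
          congr 1
          omega
        calc ((d - 1 : ℕ) : ℝ) * (n : ℝ) ^ (d - 1)
            ≤ ε / 2 * (n : ℝ) * (n : ℝ) ^ (d - 1) :=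
              mul_le_mul_of_nonneg_right hdn (pow_nonneg hn0 _)
          _ = ε / 2 * (n : ℝ) ^ d := by rw [hpow]; ring
      calc (fkt k t n : ℝ)
          ≤ ((d - 1 : ℕ) : ℝ) * (n : ℝ) ^ (d - 1) + (n : ℝ) ^ d + 1 := hchain
        _ ≤ (1 + ε) * (n : ℝ) ^ d := by linarith
    constructor
    · have hS : (1 : ℝ) ≤ (stirling2 k t : ℝ) := by
        exact_mod_cast stirling2_pos k t (by omega) htk
      have hmul : (0 : ℝ) ≤ ((stirling2 k t : ℝ) + ε) * (n : ℝ) ^ (t - 1) := by positivity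
      calc (fkt k t n : ℝ) ≤ (1 + ε) * (n : ℝ) ^ d := hkey
        _ ≤ ((stirling2 k t : ℝ) + ε) * (n : ℝ) ^ (t - 1) :=
            mul_le_mul_of_nonneg_right (by linarith) hpowd
        _ ≤ 1 + ((stirling2 k t : ℝ) + ε) * (n : ℝ) ^ (t - 1) := by linarith
    · have hfac : (1 : ℝ) ≤ (t : ℝ) ^ k / (Nat.factorial t : ℝ) := by
        rw [le_div_iff₀ (by positivity)]
        have h : (Nat.factorial t : ℝ) ≤ ((t ^ k : ℕ) : ℝ) := by
          exact_mod_cast (Nat.factorial_le_pow t).trans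
            (Nat.pow_le_pow_right (by omega) htk)
        push_cast at h
        linarith
      calc (fkt k t n : ℝ) ≤ (1 + ε) * (n : ℝ) ^ d := hkey
        _ ≤ ((t : ℝ) ^ k / (Nat.factorial t : ℝ) + ε) * (n : ℝ) ^ (t - 1) :=
            mul_le_mul_of_nonneg_right (by linarith) hpowd
end

section
/- Let t, k be integers with 2 ≤ t and 2t − 2 > k, let α = 2t − k − 2 (so α ≥ 1), and let A_{j,i} ⊆ [n] for j ∈ [k], i ∈ [m] satisfy: |A_{1,i_1} ∩ ... ∩ A_{k,i_k}| is even if and only if at least t of the indices are distinct. Then C(m − α, k − t + 1) ≤ n + 1. -/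
open Finset

namespace BKT

def tupL (m k t : ℕ) (ht : 2 ≤ t) (htk : t ≤ k) (hm : t - 1 ≤ m)
    (I : Finset (Fin m)) (hI : I.card = k - t + 1) (p : Fin k) : Fin m :=
  if h : p.val < 2 * t - k - 2 then ⟨p.val, by omega⟩
  else if h2 : p.val < t - 1 then
    ((I.orderIsoOfFin hI ⟨p.val - (2 * t - k - 2), by omega⟩ : {x // x ∈ I}) : Fin m)
  else ⟨0, by omega⟩

def tupR (m k t : ℕ) (ht : 2 ≤ t) (hm : t - 1 ≤ m)
    (J : Finset (Fin m)) (hJ : J.card = k - t + 1) (p : Fin k) : Fin m :=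
  if h : t - 1 ≤ p.val then
    ((J.orderIsoOfFin hJ ⟨p.val - (t - 1), by omega⟩ : {x // x ∈ J}) : Fin m)
  else ⟨0, by omega⟩

def tup (m k t : ℕ) (ht : 2 ≤ t) (htk : t ≤ k) (hm : t - 1 ≤ m)
    (I J : Finset (Fin m)) (hI : I.card = k - t + 1) (hJ : J.card = k - t + 1)
    (p : Fin k) : Fin m :=
  if p.val < t - 1 then tupL m k t ht htk hm I hI p else tupR m k t ht hm J hJ p

def low (m k t : ℕ) (ht : 2 ≤ t) (htk : t ≤ k) (hm : t - 1 ≤ m) : Finset (Fin m) :=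
  Finset.map (Fin.castLEEmb (by omega : 2 * t - k - 2 ≤ m)) Finset.univ

lemma mem_low (m k t : ℕ) (ht : 2 ≤ t) (htk : t ≤ k) (hm : t - 1 ≤ m) (x : Fin m) :
    x ∈ low m k t ht htk hm ↔ x.val < 2 * t - k - 2 := by
  simp only [low, mem_map, mem_univ, true_and]
  constructor
  · rintro ⟨y, rfl⟩; simp
  · intro hx; exact ⟨⟨x.val, hx⟩, by ext; simp⟩

lemma card_low (m k t : ℕ) (ht : 2 ≤ t) (htk : t ≤ k) (hm : t - 1 ≤ m) :
    (low m k t ht htk hm).card = 2 * t - k - 2 := by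
  simp [low]

variable {n m k t : ℕ} (ht : 2 ≤ t) (htk : t ≤ k) (hm : t - 1 ≤ m)
  {I J : Finset (Fin m)} (hI : I.card = k - t + 1) (hJ : J.card = k - t + 1)

lemma tup_low (p : Fin k) (hp : p.val < 2 * t - k - 2) :
    tup m k t ht htk hm I J hI hJ p = ⟨p.val, by omega⟩ := by
  unfold tup tupL
  rw [if_pos (by omega), dif_pos hp]

lemma tup_mid (p : Fin k) (hp1 : 2 * t - k - 2 ≤ p.val) (hp2 : p.val < t - 1) :
    tup m k t ht htk hm I J hI hJ p
      = ((I.orderIsoOfFin hI ⟨p.val - (2 * t - k - 2), by omega⟩ : {x // x ∈ I}) : Fin m) := by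
  unfold tup tupL
  rw [if_pos hp2, dif_neg (by omega), dif_pos hp2]

lemma tup_hi (p : Fin k) (hp : t - 1 ≤ p.val) :
    tup m k t ht htk hm I J hI hJ p
      = ((J.orderIsoOfFin hJ ⟨p.val - (t - 1), by omega⟩ : {x // x ∈ J}) : Fin m) := by
  unfold tup tupR
  rw [if_neg (by omega), dif_pos hp]

lemma image_tup (hk : k < 2 * t - 2) :
    Finset.image (tup m k t ht htk hm I J hI hJ) Finset.univ
      = low m k t ht htk hm ∪ (I ∪ J) := by
  ext x
  simp only [mem_image, mem_univ, true_and, mem_union, mem_low m k t ht htk hm]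
  constructor
  · rintro ⟨p, rfl⟩
    rcases lt_or_ge p.val (2 * t - k - 2) with h1 | h1
    · rw [tup_low ht htk hm hI hJ p h1]; exact Or.inl h1
    rcases lt_or_ge p.val (t - 1) with h2 | h2
    · rw [tup_mid ht htk hm hI hJ p h1 h2]
      exact Or.inr (Or.inl (I.orderIsoOfFin hI _).2)
    · rw [tup_hi ht htk hm hI hJ p h2]
      exact Or.inr (Or.inr (J.orderIsoOfFin hJ _).2)
  · rintro (hx | hx | hx)
    · exact ⟨⟨x.val, by omega⟩, by rw [tup_low ht htk hm hI hJ _ hx]⟩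
    · set q := (I.orderIsoOfFin hI).symm ⟨x, hx⟩ with hq
      have hql : q.val < k - t + 1 := q.isLt
      refine ⟨⟨2 * t - k - 2 + q.val, by omega⟩, ?_⟩
      rw [tup_mid ht htk hm hI hJ _ (Nat.le_add_right _ _) (by show 2*t-k-2+q.val < t-1; omega)]
      have : (⟨2 * t - k - 2 + q.val - (2 * t - k - 2), by omega⟩ : Fin (k - t + 1)) = q := by
        ext; simp
      rw [this, hq, OrderIso.apply_symm_apply]
    · set q := (J.orderIsoOfFin hJ).symm ⟨x, hx⟩ with hq
      have hql : q.val < k - t + 1 := q.isLt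
      refine ⟨⟨t - 1 + q.val, by omega⟩, ?_⟩
      rw [tup_hi ht htk hm hI hJ _ (Nat.le_add_right _ _)]
      have : (⟨t - 1 + q.val - (t - 1), by omega⟩ : Fin (k - t + 1)) = q := by
        ext; simp
      rw [this, hq, OrderIso.apply_symm_apply]

lemma card_image_tup (hk : k < 2 * t - 2)
    (hIS : ∀ x ∈ I, 2 * t - k - 2 ≤ x.val) (hJS : ∀ x ∈ J, 2 * t - k - 2 ≤ x.val) :
    (Finset.image (tup m k t ht htk hm I J hI hJ) Finset.univ).card
      = (2 * t - k - 2) + (I ∪ J).card := by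
  rw [image_tup ht htk hm hI hJ hk, Finset.card_union_of_disjoint, card_low]
  rw [Finset.disjoint_left]
  intro x hx hx'
  rw [mem_low] at hx
  rcases Finset.mem_union.1 hx' with h | h
  · exact absurd (hIS x h) (by omega)
  · exact absurd (hJS x h) (by omega)

/-- the left part of the intersection -/
def PP (A : Fin k → Fin m → Finset (Fin n)) (ht : 2 ≤ t) (htk : t ≤ k) (hm : t - 1 ≤ m)
    (I : Finset (Fin m)) (hI : I.card = k - t + 1) : Finset (Fin n) :=
  (Finset.univ.filter fun p : Fin k => p.val < t - 1).inf
    (fun p => A p (tupL m k t ht htk hm I hI p))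

/-- the right part of the intersection -/
def QQ (A : Fin k → Fin m → Finset (Fin n)) (ht : 2 ≤ t) (hm : t - 1 ≤ m)
    (J : Finset (Fin m)) (hJ : J.card = k - t + 1) : Finset (Fin n) :=
  (Finset.univ.filter fun p : Fin k => ¬ p.val < t - 1).inf
    (fun p => A p (tupR m k t ht hm J hJ p))

lemma inf_split (A : Fin k → Fin m → Finset (Fin n)) :
    (Finset.univ.inf fun p : Fin k => A p (tup m k t ht htk hm I J hI hJ p))
      = PP A ht htk hm I hI ∩ QQ A ht hm J hJ := by
  rw [← Finset.filter_union_filter_not_eq (fun p : Fin k => p.val < t - 1) Finset.univ,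
    Finset.inf_union]
  have h1 : (Finset.univ.filter fun p : Fin k => p.val < t - 1).inf
      (fun p => A p (tup m k t ht htk hm I J hI hJ p)) = PP A ht htk hm I hI := by
    refine Finset.inf_congr rfl fun p hp => ?_
    rw [Finset.mem_filter] at hp
    unfold tup
    rw [if_pos hp.2]
  have h2 : (Finset.univ.filter fun p : Fin k => ¬ p.val < t - 1).inf
      (fun p => A p (tup m k t ht htk hm I J hI hJ p)) = QQ A ht hm J hJ := by
    refine Finset.inf_congr rfl fun p hp => ?_
    rw [Finset.mem_filter] at hp
    unfold tup
    rw [if_neg hp.2]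
  rw [h1, h2]
  rfl

end BKT

set_option maxHeartbeats 1000000 in
/-- For a Bollobás set `(k,t)`-tuple modulo 2 with `2 ≤ t ≤ k` and `2t - 2 > k`,
setting `α = 2t - k - 2`, we have `C(m - α, k - t + 1) ≤ n + 1`. -/
theorem bollobas_kt_tuple_binomial_bound_large_t (n m k t : ℕ) (ht : 2 ≤ t)
    (htk : t ≤ k) (hk : k < 2 * t - 2)
    (A : Fin k → Fin m → Finset (Fin n))
    (hA : ∀ i : Fin k → Fin m,
      Even ((Finset.inf (Finset.univ : Finset (Fin k)) fun j => A j (i j)).card) ↔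
        t ≤ ((Finset.univ : Finset (Fin k)).image i).card) :
    Nat.choose (m - (2 * t - k - 2)) (k - t + 1) ≤ n + 1 := by
  classical
  by_cases hm : t - 1 ≤ m
  swap
  · rw [Nat.choose_eq_zero_of_lt (by omega)]; omega
  -- the ground set of "high" indices
  set S : Finset (Fin m) := Finset.map
    ⟨fun x : Fin (m - (2 * t - k - 2)) => (⟨2 * t - k - 2 + x.val, by omega⟩ : Fin m),
     fun a b hab => by
        have := congrArg Fin.val hab
        simp only [Fin.val_mk] at this
        ext; omega⟩ Finset.univ with hSdef
  have hScard : S.card = m - (2 * t - k - 2) := by simp [hSdef]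
  have hS : ∀ x ∈ S, 2 * t - k - 2 ≤ x.val := by
    intro x hx
    rw [hSdef, Finset.mem_map] at hx
    obtain ⟨y, -, rfl⟩ := hx
    exact Nat.le_add_right _ _
  -- index type
  set ι := {I // I ∈ S.powersetCard (k - t + 1)} with hι
  have hcard : ∀ I : ι, (I.1).card = k - t + 1 := fun I =>
    (Finset.mem_powersetCard.1 I.2).2
  have hsub : ∀ I : ι, ∀ x ∈ I.1, 2 * t - k - 2 ≤ x.val := fun I x hx =>
    hS x ((Finset.mem_powersetCard.1 I.2).1 hx)
  -- the indicator vectors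
  set v : ι → (Fin n → ZMod 2) := fun I x =>
    if x ∈ BKT.PP A ht htk hm I.1 (hcard I) then 1 else 0 with hv
  set w : ι → (Fin n → ZMod 2) := fun J x =>
    if x ∈ BKT.QQ A ht hm J.1 (hcard J) then 1 else 0 with hw
  -- the pairing
  have pairing : ∀ I J : ι, ∑ x : Fin n, v I x * w J x = if I = J then 1 else 0 := by
    intro I J
    have hsum : ∑ x : Fin n, v I x * w J x
        = (((BKT.PP A ht htk hm I.1 (hcard I)) ∩ (BKT.QQ A ht hm J.1 (hcard J))).card
            : ZMod 2) := by
      have hpt : ∀ x : Fin n, v I x * w J x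
          = if x ∈ (BKT.PP A ht htk hm I.1 (hcard I)) ∩ (BKT.QQ A ht hm J.1 (hcard J))
            then (1 : ZMod 2) else 0 := by
        intro x
        rw [hv, hw]
        by_cases h1 : x ∈ BKT.PP A ht htk hm I.1 (hcard I) <;>
          by_cases h2 : x ∈ BKT.QQ A ht hm J.1 (hcard J) <;> simp [h1, h2]
      rw [Finset.sum_congr rfl fun x _ => hpt x, Finset.sum_ite_mem, Finset.univ_inter,
        Finset.sum_const, nsmul_eq_mul, mul_one]
    rw [hsum, ← BKT.inf_split ht htk hm (hcard I) (hcard J) A]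
    have heven := hA (BKT.tup m k t ht htk hm I.1 J.1 (hcard I) (hcard J))
    rw [BKT.card_image_tup ht htk hm (hcard I) (hcard J) hk (hsub I) (hsub J)] at heven
    have hunion : (t ≤ 2 * t - k - 2 + (I.1 ∪ J.1).card) ↔ I ≠ J := by
      constructor
      · intro hle hIJ
        subst hIJ
        rw [Finset.union_self, hcard I] at hle
        omega
      · intro hne
        have hci := hcard I
        have hcj := hcard J
        have h2 : I.1.card ≤ (I.1 ∪ J.1).card :=
          Finset.card_le_card Finset.subset_union_left
        rcases Nat.lt_or_ge (k - t + 1) ((I.1 ∪ J.1).card) with h | h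
        · omega
        · exfalso
          have hIeq : I.1 = I.1 ∪ J.1 :=
            Finset.eq_of_subset_of_card_le Finset.subset_union_left (by omega)
          have hJI : J.1 ⊆ I.1 := by rw [hIeq]; exact Finset.subset_union_right
          have hJeq : J.1 = I.1 := Finset.eq_of_subset_of_card_le hJI (by omega)
          exact hne (Subtype.ext hJeq.symm)
    rw [hunion] at heven
    by_cases hIJ : I = J
    · rw [if_pos hIJ]
      have hodd : ¬ Even ((Finset.univ.inf fun p : Fin k =>
          A p (BKT.tup m k t ht htk hm I.1 J.1 (hcard I) (hcard J) p)).card) := by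
        rw [heven]; simp [hIJ]
      rw [Nat.not_even_iff_odd] at hodd
      obtain ⟨r, hr⟩ := hodd
      rw [hr]
      push_cast
      rw [(by decide : (2 : ZMod 2) = 0), zero_mul, zero_add]
    · rw [if_neg hIJ]
      have heq : Even ((Finset.univ.inf fun p : Fin k =>
          A p (BKT.tup m k t ht htk hm I.1 J.1 (hcard I) (hcard J) p)).card) := by
        rw [heven]; exact hIJ
      obtain ⟨r, hr⟩ := heq
      rw [hr]
      push_cast
      rw [← two_mul, (by decide : (2 : ZMod 2) = 0), zero_mul]
  -- linear independence
  have li : LinearIndependent (ZMod 2) v := by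
    rw [Fintype.linearIndependent_iff]
    intro c hc J
    have h0 : ∑ x : Fin n, (∑ I : ι, c I • v I) x * w J x = 0 := by
      rw [hc]; simp
    have h1 : ∑ x : Fin n, (∑ I : ι, c I • v I) x * w J x
        = ∑ I : ι, c I * (∑ x : Fin n, v I x * w J x) := by
      simp only [Finset.sum_apply, Pi.smul_apply, smul_eq_mul, Finset.sum_mul, Finset.mul_sum]
      rw [Finset.sum_comm]
      refine Finset.sum_congr rfl fun I _ => Finset.sum_congr rfl fun x _ => ?_
      ring
    rw [h1] at h0
    have h2 : ∑ I : ι, c I * (∑ x : Fin n, v I x * w J x) = c J := by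
      rw [Finset.sum_congr rfl fun I (_ : I ∈ Finset.univ) => by rw [pairing I J]]
      simp
      rw [Fintype.sum_eq_single J (fun x hx => if_neg hx)]; exact if_pos rfl
    rw [h2] at h0
    exact h0
  have hfin := li.fintype_card_le_finrank
  rw [Module.finrank_fin_fun (ZMod 2)] at hfin
  have hcardι : Fintype.card ι = Nat.choose (m - (2 * t - k - 2)) (k - t + 1) := by
    rw [← hScard, ← Finset.card_powersetCard, ← Fintype.card_coe]
  omega
end

section
/- Let m ≥ 2 and let A_{j,i} ⊆ [n] for j ∈ [5], i ∈ [m] be such that |A_{1,i_1} ∩ ... ∩ A_{5,i_5}| is even if and only if at least 4 of the indices i_1, ..., i_5 are distinct. Then the families B_j = {A_{1,1} ∩ A_{j+1,i} : 2 ≤ i ≤ m} for j ∈ [4] form a Bollobás set (4,3)-tuple modulo 2 of size m − 1, i.e. |B_{1,i_1} ∩ B_{2,i_2} ∩ B_{3,i_3} ∩ B_{4,i_4}| is even iff at least 3 of i_1, i_2, i_3, i_4 are distinct. Consequently b_{5,4}(n) ≤ b_{4,3}(n) + 1. -/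
def IsBollobasTuple (n k t m : ℕ) (A : Fin k → Fin m → Finset (Fin n)) : Prop :=
  ∀ i : Fin k → Fin m,
    Even ((Finset.inf (Finset.univ : Finset (Fin k)) fun j => A j (i j)).card) ↔
      t ≤ ((Finset.univ : Finset (Fin k)).image i).card

noncomputable def bkt (n k t : ℕ) : ℕ :=
  sSup {m | ∃ A : Fin k → Fin m → Finset (Fin n), IsBollobasTuple n k t m A}

lemma key_step (n m : ℕ) (hm : 2 ≤ m)
    (A : Fin 5 → Fin m → Finset (Fin n)) (hA : IsBollobasTuple n 5 4 m A) :
    IsBollobasTuple n 4 3 (m - 1)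
      (fun j i => A 0 ⟨0, Nat.lt_of_lt_of_le (by decide) hm⟩ ∩
        A j.succ ⟨i.1 + 1, Nat.add_lt_of_lt_sub i.2⟩) := by
  intro i
  set i' : Fin 5 → Fin m := Fin.cases ⟨0, by omega⟩
    (fun j => ⟨(i j).1 + 1, by have := (i j).2; omega⟩) with hi'
  have h1 : (Finset.inf (Finset.univ : Finset (Fin 4)) fun j =>
        A 0 ⟨0, by omega⟩ ∩ A j.succ ⟨(i j).1 + 1, by have := (i j).2; omega⟩)
      = Finset.inf (Finset.univ : Finset (Fin 5)) (fun j => A j (i' j)) := by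
    ext x
    simp only [Finset.mem_inf, Finset.mem_univ, forall_true_left, Finset.mem_inter]
    constructor
    · intro h j
      induction j using Fin.cases with
      | zero => exact (h 0).1
      | succ j => exact (h j).2
    · intro h j
      exact ⟨h 0, h j.succ⟩
  have f_inj : Function.Injective (fun v : Fin (m - 1) =>
      (⟨v.1 + 1, by have := v.2; omega⟩ : Fin m)) := by
    intro a b hab
    have : a.1 + 1 = b.1 + 1 := congrArg Fin.val hab
    exact Fin.ext (by omega)
  have h2 : (Finset.univ : Finset (Fin 5)).image i' =
      insert (⟨0, by omega⟩ : Fin m)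
        (((Finset.univ : Finset (Fin 4)).image i).image
          (fun v : Fin (m - 1) => (⟨v.1 + 1, by have := v.2; omega⟩ : Fin m))) := by
    ext x
    simp only [Finset.mem_image, Finset.mem_univ, true_and, Finset.mem_insert,
      Finset.image_image, Function.comp]
    rw [Fin.exists_fin_succ]
    simp only [i', Fin.cases_zero, Fin.cases_succ]
    tauto
  have h3 : ((Finset.univ : Finset (Fin 5)).image i').card =
      ((Finset.univ : Finset (Fin 4)).image i).card + 1 := by
    rw [h2, Finset.card_insert_of_notMem, Finset.card_image_of_injective _ f_inj]
    intro hmem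
    obtain ⟨v, -, hv⟩ := Finset.mem_image.mp hmem
    have := congrArg Fin.val hv
    simp at this
  have := hA i'
  rw [h1, this, h3]
  omega

lemma b43_bound (n M : ℕ) (B : Fin 4 → Fin M → Finset (Fin n))
    (hB : IsBollobasTuple n 4 3 M B) : M ≤ 2 ^ n + 2 := by
  by_contra h
  push_neg at h
  have hcard : Fintype.card (Finset (Fin n)) < Fintype.card (Fin M) := by
    simp only [Fintype.card_finset, Fintype.card_fin]
    omega
  obtain ⟨i, j, hij, hBij⟩ :=
    Fintype.exists_ne_map_eq_of_card_lt (fun v : Fin M => B 1 v) hcard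
  have hM : 3 ≤ M := by
    have h1 : 1 ≤ 2 ^ n := Nat.one_le_two_pow
    omega
  obtain ⟨k, hki, hkj⟩ : ∃ k : Fin M, k ≠ i ∧ k ≠ j := by
    by_contra hc
    push_neg at hc
    have key : ∀ e : Fin M, e = i ∨ e = j := fun e => by
      by_cases he : e = i
      · exact Or.inl he
      · exact Or.inr (hc e he)
    have h0 := key ⟨0, by omega⟩
    have h1 := key ⟨1, by omega⟩
    have h2 := key ⟨2, by omega⟩
    rcases h0 with h0 | h0 <;> rcases h1 with h1 | h1 <;> rcases h2 with h2 | h2 <;>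
      first
      | exact absurd (congrArg Fin.val (h0.trans h1.symm)) (by simp)
      | exact absurd (congrArg Fin.val (h0.trans h2.symm)) (by simp)
      | exact absurd (congrArg Fin.val (h1.trans h2.symm)) (by simp)
  have e1 := hB ![i, i, k, k]
  have e2 := hB ![i, j, k, k]
  have hinf : (Finset.univ.inf fun l : Fin 4 => B l (![i, i, k, k] l)) =
      (Finset.univ.inf fun l : Fin 4 => B l (![i, j, k, k] l)) := by
    congr 1
    funext l
    fin_cases l <;> simp [hBij]
  have himg1 : ((Finset.univ : Finset (Fin 4)).image ![i, i, k, k]) = {i, k} := by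
    ext x
    simp only [Finset.mem_image, Finset.mem_univ, true_and, Finset.mem_insert,
      Finset.mem_singleton]
    constructor
    · rintro ⟨l, rfl⟩
      fin_cases l <;> simp
    · rintro (rfl | rfl)
      · exact ⟨0, rfl⟩
      · exact ⟨2, rfl⟩
  have himg2 : ((Finset.univ : Finset (Fin 4)).image ![i, j, k, k]) = {i, j, k} := by
    ext x
    simp only [Finset.mem_image, Finset.mem_univ, true_and, Finset.mem_insert,
      Finset.mem_singleton]
    constructor
    · rintro ⟨l, rfl⟩
      fin_cases l <;> simp
    · rintro (rfl | rfl | rfl)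
      · exact ⟨0, rfl⟩
      · exact ⟨1, rfl⟩
      · exact ⟨2, rfl⟩
  have hc1 : ({i, k} : Finset (Fin M)).card = 2 := by
    rw [Finset.card_insert_of_notMem (by simp [Ne.symm hki]), Finset.card_singleton]
  have hc2 : ({i, j, k} : Finset (Fin M)).card = 3 := by
    rw [Finset.card_insert_of_notMem (by simp [hij, Ne.symm hki]),
      Finset.card_insert_of_notMem (by simp [Ne.symm hkj]), Finset.card_singleton]
  rw [himg1, hc1] at e1
  rw [himg2, hc2] at e2
  rw [hinf] at e1
  have h1 : ¬ Even ((Finset.univ.inf fun l : Fin 4 => B l (![i, j, k, k] l)).card) := by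
    rw [e1]; omega
  exact h1 (e2.mpr le_rfl)

/-- From a Bollobás set `(5,4)`-tuple modulo 2 of size `m ≥ 2`, the families
`B_j = {A_{1,1} ∩ A_{j+1,i} : 2 ≤ i ≤ m}` form a Bollobás set `(4,3)`-tuple
modulo 2 of size `m - 1`; consequently `b_{5,4}(n) ≤ b_{4,3}(n) + 1`. -/
theorem bollobas_54_to_43 (n m : ℕ) (hm : 2 ≤ m)
    (A : Fin 5 → Fin m → Finset (Fin n)) (hA : IsBollobasTuple n 5 4 m A) :
    IsBollobasTuple n 4 3 (m - 1)
      (fun j i => A 0 ⟨0, by omega⟩ ∩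
        A j.succ ⟨i.1 + 1, by have := i.2; omega⟩) ∧
    bkt n 5 4 ≤ bkt n 4 3 + 1 := by
  refine ⟨key_step n m hm A hA, ?_⟩
  have hb : bkt n 5 4 ≤ bkt n 4 3 + 1 := by
    unfold bkt
    apply csSup_le'
    rintro M ⟨B, hB⟩
    by_cases h : 2 ≤ M
    · have hbdd : BddAbove {p | ∃ C : Fin 4 → Fin p → Finset (Fin n),
          IsBollobasTuple n 4 3 p C} :=
        ⟨2 ^ n + 2, fun p ⟨C, hC⟩ => b43_bound n p C hC⟩
      have hmem : M - 1 ∈ {p | ∃ C : Fin 4 → Fin p → Finset (Fin n),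
          IsBollobasTuple n 4 3 p C} := ⟨_, key_step n M h B hB⟩
      have := le_csSup hbdd hmem
      omega
    · have : (0 : ℕ) ≤ sSup {p | ∃ C : Fin 4 → Fin p → Finset (Fin n),
          IsBollobasTuple n 4 3 p C} := Nat.zero_le _
      omega
  exact hb
end
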